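/- arXiv:1604.04005 — 3 statements merged into one kernel-verified Lean document; each statement's English description precedes it below -/
import Mathlib

section
/- Let X be a Tychonoff space. Then the free topological vector space V(X) is a Fréchet–Urysohn space if and only if X is finite; moreover, V(X) is metrizable if and only if X is finite. -/
open Topology Set

universe u v w

/-- `IsFreeTVS V i` says that the (real) topological vector space `V` together with the
continuous map `i : X → V` is the free topological vector space over `X`: every continuous
map from `X` to a topological vector space `E` extends uniquely to a continuous linear
operator `V →L[ℝ] E`. -/
def IsFreeTVS {X : Type u} [TopologicalSpace X] (V : Type v) [AddCommGroup V] [Module ℝ V]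
    [TopologicalSpace V] [IsTopologicalAddGroup V] [ContinuousSMul ℝ V] (i : X → V) : Prop :=
  Continuous i ∧
    ∀ (E : Type w) [AddCommGroup E] [Module ℝ E] [TopologicalSpace E]
      [IsTopologicalAddGroup E] [ContinuousSMul ℝ E] (f : X → E),
      Continuous f → ∃! g : V →L[ℝ] E, ∀ x, g (i x) = f x

/-- `SPn i n` is the set `SP_n(X) = {λ₁x₁ + ⋯ + λₙxₙ : λᵢ ∈ [−n,n], xᵢ ∈ X}` inside `V`. -/
def SPn {X : Type u} {V : Type v} [AddCommGroup V] [Module ℝ V]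
    (i : X → V) (n : ℕ) : Set V :=
  {v | ∃ (c : Fin n → ℝ) (x : Fin n → X),
    (∀ j, c j ∈ Set.Icc (-(n : ℝ)) (n : ℝ)) ∧ v = ∑ j, c j • i (x j)}

namespace FreeTVSAux

/-! ### An indiscrete copy of `ℝ` in universe `w` -/

def Ind : Type w := ULift.{w} ℝ

instance : AddCommGroup Ind.{w} := inferInstanceAs (AddCommGroup (ULift ℝ))
noncomputable instance : Module ℝ Ind.{w} := inferInstanceAs (Module ℝ (ULift ℝ))
instance : TopologicalSpace Ind.{w} := ⊤
instance : IsTopologicalAddGroup Ind.{w} :=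
  { continuous_add := continuous_top
    continuous_neg := continuous_top }
instance : ContinuousSMul ℝ Ind.{w} := ⟨continuous_top⟩

/-- The linear map `ℝ → Ind`. -/
def indUp : ℝ →ₗ[ℝ] Ind.{w} where
  toFun t := ULift.up t
  map_add' _ _ := rfl
  map_smul' _ _ := rfl

lemma indUp_injective : Function.Injective (indUp.{w}) := fun a b h => by
  exact congrArg ULift.down h

section Span

variable {X : Type u} [TopologicalSpace X] {V : Type v} [AddCommGroup V] [Module ℝ V]
    [TopologicalSpace V] [IsTopologicalAddGroup V] [ContinuousSMul ℝ V] {i : X → V}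

/-- From the uniqueness clause of the universal property (tested against an indiscrete
target), `V` is algebraically spanned by the image of `i`. -/
theorem span_eq_top (hV : IsFreeTVS.{u, v, w} V i) :
    Submodule.span ℝ (Set.range i) = ⊤ := by
  by_contra hne
  obtain ⟨v₀, hv₀⟩ : ∃ v₀ : V, v₀ ∉ Submodule.span ℝ (Set.range i) := by
    by_contra h
    push_neg at h
    exact hne (Submodule.eq_top_iff'.2 h)
  set p := Submodule.span ℝ (Set.range i)
  have hq0 : p.mkQ v₀ ≠ 0 := by
    simpa [Submodule.Quotient.mk_eq_zero] using hv₀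
  obtain ⟨φ, hφ⟩ : ∃ φ : Module.Dual ℝ (V ⧸ p), φ (p.mkQ v₀) ≠ 0 := by
    by_contra h
    push_neg at h
    exact hq0 ((Module.forall_dual_apply_eq_zero_iff ℝ _).1 h)
  -- two distinct extensions of the zero map
  have hc : Continuous (fun _ : X => (0 : Ind.{w})) := continuous_const
  obtain ⟨g, -, hgu⟩ := hV.2 Ind.{w} (fun _ => 0) hc
  have h0 : (0 : V →L[ℝ] Ind.{w}) = g := hgu 0 (fun x => rfl)
  have hφ' : (⟨indUp.comp (φ.comp p.mkQ), continuous_top⟩ : V →L[ℝ] Ind.{w}) = g := by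
    refine hgu _ (fun x => ?_)
    have hx : i x ∈ p := Submodule.subset_span (mem_range_self x)
    simp only [ContinuousLinearMap.coe_mk', LinearMap.coe_comp, Function.comp_apply]
    rw [show p.mkQ (i x) = 0 from (Submodule.Quotient.mk_eq_zero p).2 hx]
    simp [indUp]
  have := h0.trans hφ'.symm
  have h2 : ∀ v : V, (0 : Ind.{w}) = indUp (φ (p.mkQ v)) := fun v => by
    have := congrArg (fun (T : V →L[ℝ] Ind.{w}) => T v) this
    simpa using this
  have := h2 v₀
  apply hφ
  have : indUp.{w} (0 : ℝ) = indUp (φ (p.mkQ v₀)) := by simpa using this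
  exact (indUp_injective this).symm

end Span

end FreeTVSAux
namespace FreeTVSAux

section Finite

variable {X : Type u} [TopologicalSpace X] [T35Space X] {V : Type v} [AddCommGroup V]
    [Module ℝ V] [TopologicalSpace V] [IsTopologicalAddGroup V] [ContinuousSMul ℝ V] {i : X → V}

instance ulift_continuousSMul {M : Type*} [TopologicalSpace M] [AddCommMonoid M] [Module ℝ M]
    [ContinuousSMul ℝ M] : ContinuousSMul ℝ (ULift.{w} M) :=
  ⟨continuous_uliftUp.comp (continuous_fst.smul (continuous_uliftDown.comp continuous_snd))⟩

theorem metrizable_of_finite (hV : IsFreeTVS.{u, v, w} V i) (hX : Finite X) :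
    TopologicalSpace.MetrizableSpace V := by
  classical
  haveI := hX
  haveI := Fintype.ofFinite X
  set n := Fintype.card X with hn
  set e := Fintype.equivFin X with he
  haveI : DiscreteTopology X := inferInstance
  set E := ULift.{w} (Fin n → ℝ) with hE
  -- the canonical map from X to E
  set f : X → E := fun x => ULift.up (fun j => if e x = j then (1 : ℝ) else 0) with hf
  have hfc : Continuous f := continuous_of_discreteTopology
  obtain ⟨g, hg⟩ := (hV.2 E f hfc).exists
  -- the inverse linear map
  set h : E →ₗ[ℝ] V :=
    { toFun := fun u => ∑ j : Fin n, u.down j • i (e.symm j)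
      map_add' := by
        intro a b
        have hd : (a + b).down = a.down + b.down := rfl
        simp [hd, add_smul, Finset.sum_add_distrib]
      map_smul' := by
        intro c a
        have hd : (c • a).down = c • a.down := rfl
        simp [hd, Finset.smul_sum, mul_smul] } with hh
  haveI : T2Space E := inferInstance
  haveI : FiniteDimensional ℝ E :=
    Module.Finite.equiv (ULift.moduleEquiv : ULift (Fin n → ℝ) ≃ₗ[ℝ] (Fin n → ℝ)).symm
  have hhc : Continuous h := h.continuous_of_finiteDimensional
  -- g ∘ h = id
  let D : E →+ (Fin n → ℝ) :=
    AddMonoidHom.mk' (fun w => w.down) (fun _ _ => rfl)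
  have hgh : ∀ u : E, g (h u) = u := by
    intro u
    have h1 : g (h u) = ∑ j : Fin n, u.down j • f (e.symm j) := by
      simp only [hh, LinearMap.coe_mk, AddHom.coe_mk, map_sum, map_smul]
      exact Finset.sum_congr rfl fun j _ => by rw [hg]
    rw [h1, ← ULift.down_inj]
    have h2 : (∑ j : Fin n, u.down j • f (e.symm j)).down
        = ∑ j : Fin n, u.down j • (fun j' => if j = j' then (1:ℝ) else 0) := by
      rw [show (∑ j : Fin n, u.down j • f (e.symm j)).down
            = D (∑ j : Fin n, u.down j • f (e.symm j)) from rfl, map_sum]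
      refine Finset.sum_congr rfl fun j _ => ?_
      show (u.down j • f (e.symm j)).down = u.down j • (fun j' => if j = j' then (1:ℝ) else 0)
      rw [hf]
      show u.down j • (fun j' => if e (e.symm j) = j' then (1:ℝ) else 0)
          = u.down j • (fun j' => if j = j' then (1:ℝ) else 0)
      rw [e.apply_symm_apply]
    rw [h2]
    exact (pi_eq_sum_univ u.down).symm
  -- h ∘ g = id
  have hhg : ∀ v : V, h (g v) = v := by
    have hsp := span_eq_top.{u, v, w} hV
    have : (h.comp (g : V →ₗ[ℝ] E)) = LinearMap.id := by
      apply LinearMap.ext_on hsp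
      rintro _ ⟨x, rfl⟩
      simp only [LinearMap.coe_comp, Function.comp_apply, ContinuousLinearMap.coe_coe,
        LinearMap.id_coe, id_eq]
      rw [hg]
      show (∑ j : Fin n, (f x).down j • i (e.symm j)) = i x
      have hfd : (f x).down = fun j => if e x = j then (1:ℝ) else 0 := rfl
      rw [hfd]
      simp only [ite_smul, one_smul, zero_smul, Finset.sum_ite_eq, Finset.mem_univ,
        if_true, Equiv.symm_apply_apply]
    intro v
    exact congrArg (fun (T : V →ₗ[ℝ] V) => T v) this
  -- homeomorphism
  let homeo : V ≃ₜ E :=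
    { toFun := g
      invFun := h
      left_inv := hhg
      right_inv := hgh
      continuous_toFun := g.continuous
      continuous_invFun := hhc }
  have : TopologicalSpace.MetrizableSpace E :=
    (Homeomorph.ulift : E ≃ₜ (Fin n → ℝ)).isEmbedding.metrizableSpace
  exact homeo.isEmbedding.metrizableSpace

end Finite

end FreeTVSAux
namespace FreeTVSAux

section DisjointOpens

variable {Y : Type u} [TopologicalSpace Y] [T2Space Y]

theorem split_open {W : Set Y} (hW : IsOpen W) (hinf : W.Infinite) :
    ∃ p : Set Y × Set Y, (IsOpen p.1 ∧ p.1.Nonempty ∧ p.1 ⊆ W) ∧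
      (IsOpen p.2 ∧ p.2.Infinite ∧ p.2 ⊆ W) ∧ Disjoint p.1 p.2 := by
  obtain ⟨x, hx, y, hy, hxy⟩ := hinf.nontrivial
  obtain ⟨A, B, hA, hB, hxA, hyB, hAB⟩ := t2_separation hxy
  by_cases hBinf : (W ∩ B).Infinite
  · refine ⟨⟨W ∩ A, W ∩ B⟩, ⟨hW.inter hA, ⟨x, hx, hxA⟩, inter_subset_left⟩,
      ⟨hW.inter hB, hBinf, inter_subset_left⟩, ?_⟩
    exact (hAB.mono inter_subset_right inter_subset_right)
  · -- W ∩ B is finite, so y is isolated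
    have hBfin : (W ∩ B).Finite := Set.not_infinite.mp hBinf
    have hyWB : y ∈ W ∩ B := ⟨hy, hyB⟩
    have hfin2 : ((W ∩ B) \ {y}).Finite := hBfin.diff
    have hopen : IsOpen ((W ∩ B) \ ((W ∩ B) \ {y})) :=
      (hW.inter hB).sdiff hfin2.isClosed
    have hsing : (W ∩ B) \ ((W ∩ B) \ {y}) = {y} := by
      ext z
      constructor
      · rintro ⟨hz1, hz2⟩
        by_contra hne
        exact hz2 ⟨hz1, hne⟩
      · rintro rfl
        exact ⟨hyWB, fun h => h.2 rfl⟩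
    refine ⟨⟨{y}, W \ {y}⟩, ⟨hsing ▸ hopen, singleton_nonempty y, singleton_subset_iff.2 hy⟩,
      ⟨hW.sdiff isClosed_singleton, hinf.diff (finite_singleton y), diff_subset⟩, ?_⟩
    simp only [disjoint_left]
    rintro z rfl h
    exact h.2 rfl

theorem exists_disjoint_opens [Infinite Y] :
    ∃ (U : ℕ → Set Y) (y : ℕ → Y), (∀ n, IsOpen (U n)) ∧ (∀ n, y n ∈ U n) ∧
      (∀ m n, m ≠ n → Disjoint (U m) (U n)) := by
  classical
  let T := {W : Set Y // IsOpen W ∧ W.Infinite}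
  have key : ∀ W : T, ∃ p : Set Y × Set Y, (IsOpen p.1 ∧ p.1.Nonempty ∧ p.1 ⊆ W.1) ∧
      (IsOpen p.2 ∧ p.2.Infinite ∧ p.2 ⊆ W.1) ∧ Disjoint p.1 p.2 :=
    fun W => split_open W.2.1 W.2.2
  let step : T → Set Y × T := fun W =>
    ⟨(key W).choose.1, ⟨(key W).choose.2, (key W).choose_spec.2.1.1, (key W).choose_spec.2.1.2.1⟩⟩
  let seq : ℕ → Set Y × T := fun n =>
    Nat.rec (⟨∅, ⟨univ, isOpen_univ, infinite_univ⟩⟩) (fun _ p => step p.2) n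
  have hseq : ∀ n, seq (n + 1) = step (seq n).2 := fun n => rfl
  set U : ℕ → Set Y := fun n => (seq (n + 1)).1 with hU
  have hspec : ∀ n, (IsOpen (U n) ∧ (U n).Nonempty ∧ U n ⊆ ((seq n).2 : T).1) ∧
      (IsOpen ((seq (n+1)).2 : T).1 ∧ (((seq (n+1)).2 : T).1).Infinite ∧
        ((seq (n+1)).2 : T).1 ⊆ ((seq n).2 : T).1) ∧ Disjoint (U n) (((seq (n+1)).2 : T).1) :=
    fun n => (key (seq n).2).choose_spec
  have hmono : ∀ m n, m ≤ n → ((seq n).2 : T).1 ⊆ ((seq m).2 : T).1 := by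
    intro m n hmn
    induction n with
    | zero => simp_all
    | succ k ih =>
      rcases Nat.lt_or_ge m (k+1) with h | h
      · exact ((hspec k).2.1.2.2).trans (ih (Nat.lt_succ_iff.mp h))
      · have : m = k + 1 := le_antisymm (by omega) h
        subst this
        exact fun _ h => h
  have hdisj : ∀ m n, m < n → Disjoint (U m) (U n) := by
    intro m n hmn
    have h1 : U n ⊆ ((seq (m+1)).2 : T).1 :=
      ((hspec n).1.2.2).trans (hmono (m+1) n hmn)
    exact ((hspec m).2.2.mono_right h1).symm.symm
  choose yy hyy using fun n => (hspec n).1.2.1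
  refine ⟨U, yy, fun n => (hspec n).1.1, hyy, fun m n hmn => ?_⟩
  rcases Nat.lt_or_ge m n with h | h
  · exact hdisj m n h
  · exact (hdisj n m (lt_of_le_of_ne h (Ne.symm hmn))).symm

end DisjointOpens

end FreeTVSAux
namespace FreeTVSAux

section Bump

variable {Y : Type u} [TopologicalSpace Y] [T35Space Y]

theorem exists_bump {U : Set Y} (hU : IsOpen U) {x : Y} (hx : x ∈ U) :
    ∃ ψ : Y → ℝ, Continuous ψ ∧ ψ x = 1 ∧ (∀ z, z ∉ U → ψ z = 0) ∧
      ∀ z, ψ z ∈ Set.Icc (0:ℝ) 1 := by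
  obtain ⟨f, hfc, hfx, hfK⟩ :=
    CompletelyRegularSpace.completely_regular x Uᶜ hU.isClosed_compl (by simpa using hx)
  refine ⟨fun z => 1 - (f z : ℝ), by fun_prop, ?_, ?_, ?_⟩
  · show (1:ℝ) - (f x : ℝ) = 1
    rw [hfx]
    norm_num
  · intro z hz
    have h1 : f z = 1 := hfK (by simpa using hz)
    show (1:ℝ) - (f z : ℝ) = 0
    rw [h1]
    norm_num
  · intro z
    have h1 := (f z).2.1
    have h2 := (f z).2.2
    exact ⟨by simp only; linarith, by simp only; linarith⟩

end Bump

section Gamma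

/-- weight `β l = 2 / (l+1)`. -/
noncomputable def beta (l : ℕ) : ℝ := 2 / (l + 1)

lemma beta_pos (l : ℕ) : 0 < beta l := by
  unfold beta; positivity

lemma beta_le_one {l : ℕ} (hl : 1 ≤ l) : beta l ≤ 1 := by
  unfold beta
  rw [div_le_one (by positivity)]
  have : (1:ℝ) ≤ (l:ℝ) := by exact_mod_cast hl
  linarith

lemma beta_anti {l l' : ℕ} (h : l ≤ l') : beta l' ≤ beta l := by
  unfold beta
  apply div_le_div_of_nonneg_left (by norm_num) (by positivity)
  have : (l:ℝ) ≤ (l':ℝ) := by exact_mod_cast h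
  linarith

lemma beta_lt {l P : ℕ} (hP : P ≤ l) (ε : ℝ) (hε : 0 < ε) (h : 4 / ε ≤ P) : beta l < ε := by
  have h1 : beta l ≤ beta P := beta_anti hP
  have h2 : beta P < ε := by
    unfold beta
    rw [div_lt_iff₀ (by positivity)]
    have : 4 / ε ≤ (P:ℝ) := h
    have h3 : 4 ≤ ε * (P:ℝ) := by
      rw [div_le_iff₀ hε] at this
      linarith [this]
    nlinarith
  linarith

variable (Ψ : ℕ → ℝ)

/-- elementary cost of carrying mass `t` at site `l`. -/
noncomputable def gam (l : ℕ) (t : ℝ) : ℝ :=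
  ⨅ c : ℕ, ((c : ℝ) * beta l + max (|t| - c) 0 * Ψ l)

variable {Ψ}
variable (hΨ : ∀ l, 1 ≤ Ψ l)
include hΨ

lemma gam_term_nonneg (l : ℕ) (t : ℝ) (c : ℕ) :
    0 ≤ (c : ℝ) * beta l + max (|t| - c) 0 * Ψ l := by
  have h1 : 0 ≤ (c:ℝ) * beta l := mul_nonneg (by positivity) (beta_pos l).le
  have h2 : 0 ≤ max (|t| - c) 0 * Ψ l :=
    mul_nonneg (le_max_right _ _) (by linarith [hΨ l])
  linarith

lemma gam_bddBelow (l : ℕ) (t : ℝ) :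
    BddBelow (Set.range fun c : ℕ => ((c : ℝ) * beta l + max (|t| - c) 0 * Ψ l)) :=
  ⟨0, by rintro _ ⟨c, rfl⟩; exact gam_term_nonneg hΨ l t c⟩

lemma gam_nonneg (l : ℕ) (t : ℝ) : 0 ≤ gam Ψ l t :=
  le_ciInf (gam_term_nonneg hΨ l t)

lemma gam_le (l : ℕ) (t : ℝ) (c : ℕ) :
    gam Ψ l t ≤ (c : ℝ) * beta l + max (|t| - c) 0 * Ψ l :=
  ciInf_le (gam_bddBelow hΨ l t) c

lemma gam_zero (l : ℕ) : gam Ψ l 0 = 0 := by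
  refine le_antisymm ?_ (gam_nonneg hΨ l 0)
  have := gam_le hΨ l 0 0
  simpa using this

lemma gam_mono {l : ℕ} {s t : ℝ} (h : |s| ≤ |t|) : gam Ψ l s ≤ gam Ψ l t := by
  apply le_ciInf
  intro c
  refine (gam_le hΨ l s c).trans ?_
  have : max (|s| - c) 0 ≤ max (|t| - c) 0 := max_le_max (by linarith) le_rfl
  have hp : (0:ℝ) ≤ Ψ l := by linarith [hΨ l]
  nlinarith [mul_le_mul_of_nonneg_right this hp]

lemma gam_neg (l : ℕ) (t : ℝ) : gam Ψ l (-t) = gam Ψ l t :=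
  le_antisymm (gam_mono hΨ (by rw [abs_neg])) (gam_mono hΨ (by rw [abs_neg]))

lemma gam_subadd (l : ℕ) (s t : ℝ) : gam Ψ l (s + t) ≤ gam Ψ l s + gam Ψ l t := by
  by_contra hcon
  push_neg at hcon
  set δ := (gam Ψ l (s + t) - gam Ψ l s - gam Ψ l t) / 2 with hδ
  have hδpos : 0 < δ := by unfold δ; linarith
  obtain ⟨c, hc⟩ := exists_lt_of_ciInf_lt (show gam Ψ l s < gam Ψ l s + δ by linarith)
  obtain ⟨d, hd⟩ := exists_lt_of_ciInf_lt (show gam Ψ l t < gam Ψ l t + δ by linarith)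
  have hkey : gam Ψ l (s + t) ≤ ((c + d : ℕ) : ℝ) * beta l + max (|s + t| - (c + d : ℕ)) 0 * Ψ l :=
    gam_le hΨ l (s+t) (c+d)
  have hmax : max (|s + t| - ((c + d : ℕ) : ℝ)) 0 ≤ max (|s| - c) 0 + max (|t| - d) 0 := by
    apply max_le
    · push_cast
      have := abs_add_le s t
      have h1 : |s| - c ≤ max (|s| - c) 0 := le_max_left _ _
      have h2 : |t| - d ≤ max (|t| - d) 0 := le_max_left _ _
      linarith
    · have h1 : (0:ℝ) ≤ max (|s| - c) 0 := le_max_right _ _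
      have h2 : (0:ℝ) ≤ max (|t| - d) 0 := le_max_right _ _
      linarith
  have hp : (0:ℝ) ≤ Ψ l := by linarith [hΨ l]
  have hfin : gam Ψ l (s + t) ≤ ((c:ℝ) * beta l + max (|s| - c) 0 * Ψ l)
      + ((d:ℝ) * beta l + max (|t| - d) 0 * Ψ l) := by
    push_cast at hkey hmax
    nlinarith [mul_le_mul_of_nonneg_right hmax hp, hkey]
  rw [hδ] at hc hd
  linarith

lemma gam_nsmul (l : ℕ) (t : ℝ) (N : ℕ) : gam Ψ l ((N : ℝ) * t) ≤ (N : ℝ) * gam Ψ l t := by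
  induction N with
  | zero => simp [gam_zero hΨ]
  | succ k ih =>
    push_cast
    have h1 : ((k:ℝ) + 1) * t = (k:ℝ) * t + t := by ring
    rw [h1]
    calc gam Ψ l ((k:ℝ) * t + t) ≤ gam Ψ l ((k:ℝ) * t) + gam Ψ l t := gam_subadd hΨ l _ _
      _ ≤ (k:ℝ) * gam Ψ l t + gam Ψ l t := by linarith
      _ = ((k:ℝ) + 1) * gam Ψ l t := by ring

lemma gam_smul_le (l : ℕ) (t : ℝ) (c : ℝ) (N : ℕ) (hN : |c| ≤ (N:ℝ)) :
    gam Ψ l (c * t) ≤ (N : ℝ) * gam Ψ l t := by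
  have h1 : |c * t| ≤ |(N:ℝ) * t| := by
    rw [abs_mul, abs_mul, abs_of_nonneg (by positivity : (0:ℝ) ≤ (N:ℝ))]
    exact mul_le_mul_of_nonneg_right hN (abs_nonneg t)
  exact (gam_mono hΨ h1).trans (gam_nsmul hΨ l t N)

lemma gam_le_beta {l : ℕ} {t : ℝ} (h : |t| ≤ 1) : gam Ψ l t ≤ beta l := by
  have := gam_le hΨ l t 1
  have hm : max (|t| - (1:ℕ)) 0 = 0 := by
    apply max_eq_right
    push_cast
    linarith
  rw [hm] at this
  simpa using this

lemma gam_le_lin (l : ℕ) (t : ℝ) : gam Ψ l t ≤ |t| * Ψ l := by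
  have := gam_le hΨ l t 0
  simpa [max_eq_left (abs_nonneg t)] using this

lemma gam_lower (l : ℕ) (t : ℝ) : min (beta l) (|t| * Ψ l) ≤ gam Ψ l t := by
  apply le_ciInf
  intro c
  rcases Nat.eq_zero_or_pos c with rfl | hc
  · simp only [Nat.cast_zero, zero_mul, zero_add, sub_zero]
    rw [max_eq_left (abs_nonneg t)]
    exact min_le_right _ _
  · have h1 : beta l ≤ (c:ℝ) * beta l := by
      have : (1:ℝ) ≤ (c:ℝ) := by exact_mod_cast hc
      nlinarith [beta_pos l]
    have h2 : 0 ≤ max (|t| - c) 0 * Ψ l :=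
      mul_nonneg (le_max_right _ _) (by linarith [hΨ l])
    have := min_le_left (beta l) (|t| * Ψ l)
    linarith

end Gamma

end FreeTVSAux
namespace FreeTVSAux

section Cost

open Finsupp

variable {Ψ : ℕ → ℝ}

/-- total cost of a finitely supported family of coefficients. -/
noncomputable def Cost (Ψ : ℕ → ℝ) (v : ℕ →₀ ℝ) : ℝ :=
  ∑ l ∈ v.support, gam Ψ l (v l)

variable (hΨ : ∀ l, 1 ≤ Ψ l)
include hΨ

lemma Cost_eq_superset {v : ℕ →₀ ℝ} {s : Finset ℕ} (hs : v.support ⊆ s) :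
    Cost Ψ v = ∑ l ∈ s, gam Ψ l (v l) := by
  refine Finset.sum_subset hs fun l _ hl => ?_
  rw [Finsupp.notMem_support_iff.mp hl, gam_zero hΨ]

lemma Cost_nonneg (v : ℕ →₀ ℝ) : 0 ≤ Cost Ψ v :=
  Finset.sum_nonneg fun l _ => gam_nonneg hΨ l _

lemma Cost_zero : Cost Ψ 0 = 0 := by simp [Cost]

lemma Cost_add_le (v w : ℕ →₀ ℝ) : Cost Ψ (v + w) ≤ Cost Ψ v + Cost Ψ w := by
  classical
  have h1 : (v + w).support ⊆ v.support ∪ w.support := Finsupp.support_add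
  rw [Cost_eq_superset hΨ h1,
    Cost_eq_superset hΨ (Finset.subset_union_left : v.support ⊆ v.support ∪ w.support),
    Cost_eq_superset hΨ (Finset.subset_union_right : w.support ⊆ v.support ∪ w.support),
    ← Finset.sum_add_distrib]
  refine Finset.sum_le_sum fun l _ => ?_
  rw [Finsupp.add_apply]
  exact gam_subadd hΨ l _ _

lemma Cost_neg (v : ℕ →₀ ℝ) : Cost Ψ (-v) = Cost Ψ v := by
  unfold Cost
  rw [Finsupp.support_neg]
  exact Finset.sum_congr rfl fun l _ => by rw [Finsupp.neg_apply, gam_neg hΨ]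

lemma Cost_smul_le (c : ℝ) (v : ℕ →₀ ℝ) (N : ℕ) (hN : |c| ≤ (N:ℝ)) :
    Cost Ψ (c • v) ≤ (N:ℝ) * Cost Ψ v := by
  classical
  rw [Cost_eq_superset hΨ (Finsupp.support_smul : (c • v).support ⊆ v.support), Cost,
    Finset.mul_sum]
  refine Finset.sum_le_sum fun l _ => ?_
  rw [Finsupp.smul_apply, smul_eq_mul]
  exact gam_smul_le hΨ l (v l) c N hN

lemma Cost_single_le (l : ℕ) (t : ℝ) : Cost Ψ (Finsupp.single l t) ≤ gam Ψ l t := by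
  classical
  rw [Cost_eq_superset hΨ (Finsupp.support_single_subset : (Finsupp.single l t).support ⊆ {l})]
  simp [Finsupp.single_eq_same]

/-- the pseudometric induced by the cost functional. -/
noncomputable def costPMS : PseudoMetricSpace (ℕ →₀ ℝ) where
  dist v w := Cost Ψ (v - w)
  dist_self v := by simp [Cost_zero hΨ]
  dist_comm v w := by
    have : w - v = -(v - w) := by abel
    show Cost Ψ (v - w) = Cost Ψ (w - v)
    rw [this, Cost_neg hΨ]
  dist_triangle v w u := by
    have : v - u = (v - w) + (w - u) := by abel
    show Cost Ψ (v - u) ≤ Cost Ψ (v - w) + Cost Ψ (w - u)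
    rw [this]
    exact Cost_add_le hΨ _ _

lemma costPMS_dist (v w : ℕ →₀ ℝ) : @dist _ (costPMS hΨ).toDist v w = Cost Ψ (v - w) := rfl

/-- addition is continuous for the cost pseudometric. -/
lemma cost_tag :
    @IsTopologicalAddGroup (ℕ →₀ ℝ) (costPMS hΨ).toUniformSpace.toTopologicalSpace _ := by
  letI := costPMS hΨ
  refine { continuous_add := ?_, continuous_neg := ?_ }
  · rw [Metric.continuous_iff]
    rintro ⟨a, b⟩ ε hε
    refine ⟨ε/2, by positivity, ?_⟩
    rintro ⟨x, y⟩ hd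
    have h1 : dist x a < ε/2 := lt_of_le_of_lt (le_max_left _ _) hd
    have h2 : dist y b < ε/2 := lt_of_le_of_lt (le_max_right _ _) hd
    show Cost Ψ (x + y - (a + b)) < ε
    have he : x + y - (a + b) = (x - a) + (y - b) := by abel
    rw [he]
    calc Cost Ψ ((x - a) + (y - b)) ≤ Cost Ψ (x - a) + Cost Ψ (y - b) := Cost_add_le hΨ _ _
      _ < ε := by
        have e1 : Cost Ψ (x - a) = dist x a := rfl
        have e2 : Cost Ψ (y - b) = dist y b := rfl
        rw [e1, e2]; linarith
  · rw [Metric.continuous_iff]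
    intro a ε hε
    refine ⟨ε, hε, fun x hd => ?_⟩
    show Cost Ψ (-x - -a) < ε
    have he : -x - -a = -(x - a) := by abel
    rw [he, Cost_neg hΨ]
    exact hd

/-- scalar multiplication is continuous for the cost pseudometric. -/
lemma cost_csmul :
    @ContinuousSMul ℝ (ℕ →₀ ℝ) _ _ (costPMS hΨ).toUniformSpace.toTopologicalSpace := by
  letI := costPMS hΨ
  constructor
  rw [Metric.continuous_iff]
  rintro ⟨c₀, v₀⟩ ε hε
  classical
  set S : ℝ := ∑ l ∈ v₀.support, |v₀ l| * Ψ l with hS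
  have hS0 : 0 ≤ S := Finset.sum_nonneg fun l _ =>
    mul_nonneg (abs_nonneg _) (by linarith [hΨ l])
  set N : ℕ := ⌈|c₀|⌉₊ + 1 with hN
  have hNpos : (0:ℝ) < (N:ℝ) := by positivity
  set δ : ℝ := min 1 (ε / ((N:ℝ) + S + 1)) with hδ
  have hδpos : 0 < δ := by
    apply lt_min one_pos
    positivity
  refine ⟨δ, hδpos, ?_⟩
  rintro ⟨c, v⟩ hd
  have h1 : dist c c₀ < δ := lt_of_le_of_lt (le_max_left _ _) hd
  have h2 : dist v v₀ < δ := lt_of_le_of_lt (le_max_right _ _) hd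
  show Cost Ψ (c • v - c₀ • v₀) < ε
  have he : c • v - c₀ • v₀ = c • (v - v₀) + (c - c₀) • v₀ := by
    rw [smul_sub, sub_smul]; abel
  rw [he]
  have hcN : |c| ≤ (N:ℝ) := by
    have h3 : |c - c₀| < δ := by
      rw [Real.dist_eq] at h1; exact h1
    have h4 : |c| ≤ |c₀| + |c - c₀| := by
      calc |c| = |c₀ + (c - c₀)| := by ring_nf
        _ ≤ |c₀| + |c - c₀| := abs_add_le _ _
    have h5 : |c₀| ≤ (⌈|c₀|⌉₊ : ℝ) := Nat.le_ceil _
    have h6 : δ ≤ 1 := min_le_left _ _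
    rw [hN]; push_cast; linarith
  have hb1 : Cost Ψ (c • (v - v₀)) ≤ (N:ℝ) * Cost Ψ (v - v₀) :=
    Cost_smul_le hΨ c (v - v₀) N hcN
  have hb2 : Cost Ψ ((c - c₀) • v₀) ≤ |c - c₀| * S := by
    rw [Cost_eq_superset hΨ (Finsupp.support_smul : ((c - c₀) • v₀).support ⊆ v₀.support), hS,
      Finset.mul_sum]
    refine Finset.sum_le_sum fun l _ => ?_
    rw [Finsupp.smul_apply, smul_eq_mul]
    calc gam Ψ l ((c - c₀) * v₀ l) ≤ |(c - c₀) * v₀ l| * Ψ l := gam_le_lin hΨ l _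
      _ = |c - c₀| * (|v₀ l| * Ψ l) := by rw [abs_mul]; ring
  have hcv : Cost Ψ (v - v₀) < δ := h2
  have hcc : |c - c₀| < δ := by rw [Real.dist_eq] at h1; exact h1
  have hccnn : 0 ≤ |c - c₀| := abs_nonneg _
  have hδε : δ * ((N:ℝ) + S + 1) ≤ ε := by
    have hle : δ ≤ ε / ((N:ℝ) + S + 1) := min_le_right _ _
    calc δ * ((N:ℝ) + S + 1) ≤ (ε / ((N:ℝ) + S + 1)) * ((N:ℝ) + S + 1) :=
        mul_le_mul_of_nonneg_right hle (by positivity)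
      _ = ε := by field_simp
  calc Cost Ψ (c • (v - v₀) + (c - c₀) • v₀)
      ≤ Cost Ψ (c • (v - v₀)) + Cost Ψ ((c - c₀) • v₀) := Cost_add_le hΨ _ _
    _ ≤ (N:ℝ) * Cost Ψ (v - v₀) + |c - c₀| * S := by
        have := add_le_add hb1 hb2; linarith
    _ < (N:ℝ) * δ + δ * S := by
        have hCnn : 0 ≤ Cost Ψ (v - v₀) := Cost_nonneg hΨ _
        have t1 : (N:ℝ) * Cost Ψ (v - v₀) < (N:ℝ) * δ :=
          mul_lt_mul_of_pos_left hcv hNpos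
        have t2 : |c - c₀| * S ≤ δ * S := mul_le_mul_of_nonneg_right hcc.le hS0
        linarith
    _ ≤ ε := by nlinarith [hδε, hδpos.le]

end Cost

end FreeTVSAux
namespace FreeTVSAux

section FMap

open Finsupp

variable {Y : Type u} [TopologicalSpace Y] (U : ℕ → Set Y) (ψ : ℕ → Y → ℝ)

open scoped Classical in
/-- index of the (unique) open set of the family containing `x` (0 if none with index ≥ 1). -/
noncomputable def idx (x : Y) : ℕ :=
  if h : ∃ l, 1 ≤ l ∧ x ∈ U l then h.choose else 0

lemma idx_mem {x : Y} (h : 1 ≤ idx U x) : x ∈ U (idx U x) := by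
  classical
  unfold idx at *
  split at h
  · next hex =>
    rw [dif_pos hex]
    exact hex.choose_spec.2
  · omega

lemma idx_eq (hdisj : ∀ m n, m ≠ n → Disjoint (U m) (U n)) {l : ℕ} {x : Y}
    (hl : 1 ≤ l) (hx : x ∈ U l) : idx U x = l := by
  classical
  have hex : ∃ l', 1 ≤ l' ∧ x ∈ U l' := ⟨l, hl, hx⟩
  unfold idx
  rw [dif_pos hex]
  by_contra hne
  exact (Set.disjoint_left.mp (hdisj _ _ hne) hex.choose_spec.2) hx

lemma idx_ge_one (hdisj : ∀ m n, m ≠ n → Disjoint (U m) (U n)) {l : ℕ} {x : Y}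
    (hl : 1 ≤ l) (hx : x ∈ U l) : 1 ≤ idx U x := by
  rw [idx_eq U hdisj hl hx]; exact hl

/-- the basic test map from `Y` to finitely supported coefficient families. -/
noncomputable def fmap (x : Y) : ℕ →₀ ℝ :=
  Finsupp.single (idx U x) (if 1 ≤ idx U x then ψ (idx U x) x else 0)

lemma fmap_eq_single {x : Y} (h : 1 ≤ idx U x) :
    fmap U ψ x = Finsupp.single (idx U x) (ψ (idx U x) x) := by
  unfold fmap; rw [if_pos h]

lemma fmap_eq_zero {x : Y} (h : ¬ 1 ≤ idx U x) : fmap U ψ x = 0 := by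
  unfold fmap; rw [if_neg h, Finsupp.single_zero]

lemma fmap_of_mem (hdisj : ∀ m n, m ≠ n → Disjoint (U m) (U n)) {l : ℕ} {x : Y}
    (hl : 1 ≤ l) (hx : x ∈ U l) : fmap U ψ x = Finsupp.single l (ψ l x) := by
  have h1 := idx_ge_one U hdisj hl hx
  rw [fmap_eq_single U ψ h1, idx_eq U hdisj hl hx]

variable {Ψ : ℕ → ℝ} (hΨ : ∀ l, 1 ≤ Ψ l)

lemma fmap_continuous (hΨ : ∀ l, 1 ≤ Ψ l)
    (hUo : ∀ n, IsOpen (U n))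
    (hdisj : ∀ m n, m ≠ n → Disjoint (U m) (U n))
    (hψc : ∀ l, Continuous (ψ l))
    (hψ0 : ∀ l z, z ∉ U l → ψ l z = 0)
    (hψb : ∀ l z, |ψ l z| ≤ 1) :
    @Continuous Y (ℕ →₀ ℝ) _ (costPMS hΨ).toUniformSpace.toTopologicalSpace (fmap U ψ) := by
  letI := costPMS hΨ
  rw [continuous_iff_continuousAt]
  intro z
  rw [ContinuousAt, Metric.tendsto_nhds]
  intro ε hε
  have hΨpos : ∀ l, (0:ℝ) < Ψ l := fun l => lt_of_lt_of_le one_pos (hΨ l)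
  set P : ℕ := ⌈8/ε⌉₊ with hP
  have hPbeta : ∀ l, P ≤ l → beta l < ε/2 := by
    intro l hl
    refine beta_lt hl (ε/2) (by positivity) ?_
    have : (8:ℝ)/ε ≤ (P:ℝ) := Nat.le_ceil _
    calc 4 / (ε/2) = 8/ε := by field_simp; ring
      _ ≤ (P:ℝ) := this
  by_cases hc : 1 ≤ idx U z
  · -- z lies in one of the open sets
    set l₀ := idx U z with hl₀
    have hzU : z ∈ U l₀ := idx_mem U hc
    have hopen : IsOpen (U l₀ ∩ {x | |ψ l₀ x - ψ l₀ z| < ε/(2 * Ψ l₀)}) := by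
      refine (hUo l₀).inter ?_
      have : Continuous fun x => |ψ l₀ x - ψ l₀ z| := by fun_prop
      exact isOpen_lt this continuous_const
    have hzin : z ∈ U l₀ ∩ {x | |ψ l₀ x - ψ l₀ z| < ε/(2 * Ψ l₀)} := by
      refine ⟨hzU, ?_⟩
      simp only [mem_setOf_eq, sub_self, abs_zero]
      exact div_pos hε (by linarith [hΨpos l₀])
    filter_upwards [hopen.mem_nhds hzin] with x hx
    have hxU : x ∈ U l₀ := hx.1
    have hidx : idx U x = l₀ := idx_eq U hdisj hc hxU
    have hfx : fmap U ψ x = Finsupp.single l₀ (ψ l₀ x) := fmap_of_mem U ψ hdisj hc hxU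
    have hfz : fmap U ψ z = Finsupp.single l₀ (ψ l₀ z) := fmap_of_mem U ψ hdisj hc hzU
    show Cost Ψ (fmap U ψ x - fmap U ψ z) < ε
    rw [hfx, hfz, ← Finsupp.single_sub]
    calc Cost Ψ (Finsupp.single l₀ (ψ l₀ x - ψ l₀ z)) ≤ gam Ψ l₀ (ψ l₀ x - ψ l₀ z) :=
        Cost_single_le hΨ _ _
      _ ≤ |ψ l₀ x - ψ l₀ z| * Ψ l₀ := gam_le_lin hΨ _ _
      _ < (ε/(2 * Ψ l₀)) * Ψ l₀ := by
          apply mul_lt_mul_of_pos_right hx.2 (hΨpos l₀)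
      _ = ε/2 := by
          have hne : Ψ l₀ ≠ 0 := ne_of_gt (hΨpos l₀)
          field_simp
      _ < ε := by linarith
  · -- z lies in none of them
    have hfz : fmap U ψ z = 0 := fmap_eq_zero U ψ hc
    have hznot : ∀ l, 1 ≤ l → z ∉ U l := by
      intro l hl hmem
      exact hc (idx_ge_one U hdisj hl hmem)
    have hopen : IsOpen (⋂ l ∈ Finset.Ico 1 P, {x | |ψ l x| < ε/(2 * Ψ l)}) := by
      refine isOpen_biInter_finset fun l _ => ?_
      exact isOpen_lt (by fun_prop) continuous_const
    have hzin : z ∈ ⋂ l ∈ Finset.Ico 1 P, {x | |ψ l x| < ε/(2 * Ψ l)} := by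
      simp only [Set.mem_iInter, mem_setOf_eq]
      intro l hl
      rw [hψ0 l z (hznot l (Finset.mem_Ico.mp hl).1)]
      simp only [abs_zero]
      exact div_pos hε (by linarith [hΨpos l])
    filter_upwards [hopen.mem_nhds hzin] with x hx
    show Cost Ψ (fmap U ψ x - fmap U ψ z) < ε
    rw [hfz, sub_zero]
    by_cases hcx : 1 ≤ idx U x
    · set l' := idx U x with hl'
      have hfx : fmap U ψ x = Finsupp.single l' (ψ l' x) := fmap_eq_single U ψ hcx
      rw [hfx]
      by_cases hlP : l' < P
      · have hxW : |ψ l' x| < ε/(2 * Ψ l') := by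
          have := Set.mem_iInter.mp hx l'
          simp only [Set.mem_iInter, mem_setOf_eq] at this
          exact this (Finset.mem_Ico.mpr ⟨hcx, hlP⟩)
        calc Cost Ψ (Finsupp.single l' (ψ l' x)) ≤ gam Ψ l' (ψ l' x) := Cost_single_le hΨ _ _
          _ ≤ |ψ l' x| * Ψ l' := gam_le_lin hΨ _ _
          _ < (ε/(2 * Ψ l')) * Ψ l' := mul_lt_mul_of_pos_right hxW (hΨpos l')
          _ = ε/2 := by
              have hne : Ψ l' ≠ 0 := ne_of_gt (hΨpos l')
              field_simp
          _ < ε := by linarith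
      · have hPl : P ≤ l' := le_of_not_gt hlP
        calc Cost Ψ (Finsupp.single l' (ψ l' x)) ≤ gam Ψ l' (ψ l' x) := Cost_single_le hΨ _ _
          _ ≤ beta l' := gam_le_beta hΨ (hψb l' x)
          _ < ε/2 := hPbeta l' hPl
          _ < ε := by linarith
    · rw [fmap_eq_zero U ψ hcx, Cost_zero hΨ]
      exact hε

end FMap

section Block

variable {Ψ : ℕ → ℝ}

lemma cost_block (hΨ : ∀ l, 1 ≤ Ψ l) {n m : ℕ} (hn : 2 ≤ n) (hm : 1 ≤ m)
    (hΨm : ∀ l, n ≤ 2 * l → (m:ℝ) ≤ Ψ l) :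
    1/2 < Cost Ψ (∑ l ∈ Finset.Icc 1 n, Finsupp.single l ((m:ℝ)⁻¹)) := by
  classical
  set v : ℕ →₀ ℝ := ∑ l ∈ Finset.Icc 1 n, Finsupp.single l ((m:ℝ)⁻¹) with hv
  have hmpos : (0:ℝ) < (m:ℝ) := by exact_mod_cast hm
  have hsupp : v.support ⊆ Finset.Icc 1 n := by
    intro a ha
    obtain ⟨c, hc, hac⟩ := Finsupp.mem_support_finset_sum a ha
    have := Finsupp.support_single_subset hac
    rw [Finset.mem_singleton] at this
    rwa [this]
  have hval : ∀ l' ∈ Finset.Icc 1 n, v l' = (m:ℝ)⁻¹ := by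
    intro l' hl'
    rw [hv, Finsupp.finset_sum_apply]
    rw [Finset.sum_congr rfl fun l _ => Finsupp.single_apply]
    rw [Finset.sum_ite_eq' (Finset.Icc 1 n) l' (fun _ => (m:ℝ)⁻¹)]
    rw [if_pos hl']
  rw [Cost_eq_superset hΨ hsupp]
  have hsub : Finset.Icc (n/2 + 1) n ⊆ Finset.Icc 1 n := by
    intro l hl
    rw [Finset.mem_Icc] at *
    omega
  have hlow : ∑ l ∈ Finset.Icc (n/2 + 1) n, beta l ≤ ∑ l ∈ Finset.Icc 1 n, gam Ψ l (v l) := by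
    refine le_trans ?_ (Finset.sum_le_sum_of_subset_of_nonneg hsub
      (fun l _ _ => gam_nonneg hΨ l _))
    refine Finset.sum_le_sum fun l hl => ?_
    have hlmem := hsub hl
    rw [hval l hlmem]
    have h2l : n ≤ 2 * l := by
      rw [Finset.mem_Icc] at hl
      omega
    have hΨl := hΨm l h2l
    have hbl : beta l ≤ 1 := beta_le_one (by rw [Finset.mem_Icc] at hlmem; exact hlmem.1)
    have h1 : (1:ℝ) ≤ |(m:ℝ)⁻¹| * Ψ l := by
      rw [abs_of_pos (by positivity)]
      rw [inv_mul_eq_div, le_div_iff₀ hmpos]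
      linarith
    have hgl := gam_lower hΨ l ((m:ℝ)⁻¹)
    have hmin : beta l ≤ min (beta l) (|(m:ℝ)⁻¹| * Ψ l) := le_min le_rfl (by linarith)
    linarith
  have hcard : (Finset.Icc (n/2 + 1) n).card = n - n/2 := by
    rw [Nat.card_Icc]
    omega
  have hbeta_each : ∀ l ∈ Finset.Icc (n/2 + 1) n, beta n ≤ beta l := by
    intro l hl
    rw [Finset.mem_Icc] at hl
    exact beta_anti hl.2
  have hsum2 : (↑(n - n/2) : ℝ) * beta n ≤ ∑ l ∈ Finset.Icc (n/2 + 1) n, beta l := by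
    calc (↑(n - n/2):ℝ) * beta n = ∑ _l ∈ Finset.Icc (n/2 + 1) n, beta n := by
          rw [Finset.sum_const, hcard, nsmul_eq_mul]
      _ ≤ ∑ l ∈ Finset.Icc (n/2 + 1) n, beta l := Finset.sum_le_sum hbeta_each
  have hhalf : (n:ℝ)/2 ≤ (↑(n - n/2):ℝ) := by
    have h1 : ((n/2 : ℕ):ℝ) ≤ (n:ℝ)/2 := Nat.cast_div_le
    have hle : n/2 ≤ n := Nat.div_le_self n 2
    have h2 : (↑(n - n/2):ℝ) = (n:ℝ) - ((n/2 : ℕ):ℝ) := by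
      push_cast [hle]
      ring
    rw [h2]
    linarith
  have hn3 : (2:ℝ) ≤ (n:ℝ) := by exact_mod_cast hn
  have hpos : (0:ℝ) < (n:ℝ)+1 := by positivity
  have hb : beta n = 2/((n:ℝ)+1) := rfl
  have h23 : (2:ℝ)/3 ≤ (n:ℝ)/((n:ℝ)+1) := by
    rw [div_le_div_iff₀ (by norm_num) hpos]
    linarith
  have h24 : (n:ℝ)/((n:ℝ)+1) ≤ (↑(n-n/2):ℝ) * (2/((n:ℝ)+1)) := by
    rw [← mul_div_assoc, div_le_div_iff₀ hpos hpos]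
    nlinarith [hhalf, hpos]
  have hkey : (2:ℝ)/3 ≤ (↑(n - n/2):ℝ) * beta n := by
    rw [hb]
    linarith
  linarith

end Block

end FreeTVSAux
namespace FreeTVSAux

section Hard

open Filter

variable {X : Type u} [TopologicalSpace X] [T35Space X] {V : Type v} [AddCommGroup V]
    [Module ℝ V] [TopologicalSpace V] [IsTopologicalAddGroup V] [ContinuousSMul ℝ V] {i : X → V}

theorem not_frechetUrysohn_of_infinite (hV : IsFreeTVS.{u, v, w} V i) (hX : Infinite X) :
    ¬ FrechetUrysohnSpace V := by
  intro hFU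
  classical
  haveI := hX
  obtain ⟨U, y, hUo, hymem, hdisj⟩ := exists_disjoint_opens (Y := X)
  choose ψ hψc hψ1 hψ0 hψb using fun l => exists_bump (hUo l) (hymem l)
  have hψb' : ∀ l z, |ψ l z| ≤ 1 := fun l z => by
    have := hψb l z
    rw [abs_le]
    constructor <;> [linarith [this.1]; exact this.2]
  -- the test set A
  set wv : ℕ → V := fun n => ∑ l ∈ Finset.Icc 1 n, i (y l) with hwv
  set A : Set V := {v | ∃ n m : ℕ, 1 ≤ n ∧ 1 ≤ m ∧
    v = ((n:ℝ))⁻¹ • i (y 0) + ((m:ℝ))⁻¹ • wv n} with hA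
  -- 0 is in the closure of A
  have hA0 : (0:V) ∈ closure A := by
    rw [mem_closure_iff]
    intro O hO h0O
    have t1 : Tendsto (fun n : ℕ => ((n:ℝ))⁻¹ • i (y 0)) atTop (𝓝 0) := by
      have := (tendsto_inv_atTop_nhds_zero_nat (𝕜 := ℝ)).smul_const (i (y 0))
      rwa [zero_smul] at this
    obtain ⟨n, hnO, hn1⟩ :=
      ((t1.eventually_mem (hO.mem_nhds h0O)).and (eventually_ge_atTop 1)).exists
    have t2 : Tendsto (fun m : ℕ => ((n:ℝ))⁻¹ • i (y 0) + ((m:ℝ))⁻¹ • wv n) atTop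
        (𝓝 (((n:ℝ))⁻¹ • i (y 0))) := by
      have h2 := (tendsto_inv_atTop_nhds_zero_nat (𝕜 := ℝ)).smul_const (wv n)
      rw [zero_smul] at h2
      have h3 := (tendsto_const_nhds
        (x := ((n:ℝ))⁻¹ • i (y 0)) (f := (atTop : Filter ℕ))).add h2
      rwa [add_zero] at h3
    obtain ⟨m, hmO, hm1⟩ :=
      ((t2.eventually_mem (hO.mem_nhds hnO)).and (eventually_ge_atTop 1)).exists
    exact ⟨_, hmO, ⟨n, m, hn1, hm1, rfl⟩⟩
  -- extract a convergent sequence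
  obtain ⟨a, haA, haT⟩ := mem_closure_iff_seq_limit.mp hA0
  choose nf mf hn1 hm1 heq using haA
  -- First test: the coefficients (nf p)⁻¹ must tend to 0
  have hψcont0 : Continuous fun x => ULift.up.{w} (ψ 0 x) := continuous_uliftUp.comp (hψc 0)
  obtain ⟨g₁, hg₁⟩ := (hV.2 (ULift.{w} ℝ) (fun x => ULift.up (ψ 0 x)) hψcont0).exists
  have hyl0 : ∀ l, 1 ≤ l → ψ 0 (y l) = 0 := fun l hl =>
    hψ0 0 (y l) (Set.disjoint_left.mp (hdisj l 0 (by omega)) (hymem l))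
  have hval1 : ∀ p, g₁ (a p) = ULift.up ((nf p : ℝ)⁻¹) := by
    intro p
    rw [heq p, map_add, map_smul, map_smul]
    have hgw : g₁ (wv (nf p)) = 0 := by
      rw [hwv]
      simp only
      rw [map_sum]
      refine Finset.sum_eq_zero fun l hl => ?_
      rw [hg₁, hyl0 l (Finset.mem_Icc.mp hl).1]
      rfl
    rw [hgw, smul_zero, add_zero, hg₁, hψ1 0]
    rw [← ULift.down_inj]
    show ((nf p : ℝ))⁻¹ • (1:ℝ) = (nf p : ℝ)⁻¹
    rw [smul_eq_mul, mul_one]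
  have hinv : Tendsto (fun p => (nf p : ℝ)⁻¹) atTop (𝓝 0) := by
    have h1 : Tendsto (fun p => g₁ (a p)) atTop (𝓝 (g₁ 0)) :=
      (g₁.continuous.tendsto 0).comp haT
    rw [map_zero] at h1
    have h2 : Tendsto (fun p => (g₁ (a p)).down) atTop (𝓝 ((0 : ULift.{w} ℝ).down)) :=
      ((continuous_uliftDown.tendsto _)).comp h1
    have h3 : (fun p => (g₁ (a p)).down) = fun p => (nf p : ℝ)⁻¹ :=
      funext fun p => by rw [hval1 p]
    rw [h3] at h2
    exact h2
  have hnf : Tendsto nf atTop atTop := by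
    rw [Filter.tendsto_atTop]
    intro b
    have hb : (0:ℝ) < ((b:ℝ)+1)⁻¹ := by positivity
    filter_upwards [Metric.tendsto_nhds.mp hinv _ hb] with p hp
    rw [Real.dist_eq, sub_zero] at hp
    have hnfp : (0:ℝ) < (nf p : ℝ) := by
      have := hn1 p
      exact_mod_cast Nat.lt_of_lt_of_le Nat.zero_lt_one this
    rw [abs_of_pos (by positivity)] at hp
    by_contra hcon
    push_neg at hcon
    have hle : (nf p : ℝ) ≤ (b:ℝ) + 1 := by
      have : nf p ≤ b := le_of_lt hcon
      have : (nf p : ℝ) ≤ (b:ℝ) := by exact_mod_cast this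
      linarith
    have : ((b:ℝ)+1)⁻¹ ≤ (nf p : ℝ)⁻¹ := by
      apply inv_anti₀ hnfp hle
    linarith
  -- build the weight function
  have hP : ∀ l : ℕ, ∃ P, ∀ p, P ≤ p → 2 * l < nf p := fun l =>
    Filter.eventually_atTop.mp (hnf.eventually_gt_atTop (2*l))
  choose P hPspec using hP
  set Ψ : ℕ → ℝ := fun l => (((Finset.range (P l)).sup mf + 1 : ℕ) : ℝ) with hΨdef
  have hΨ : ∀ l, 1 ≤ Ψ l := fun l => by
    show (1:ℝ) ≤ (((Finset.range (P l)).sup mf + 1 : ℕ) : ℝ)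
    exact_mod_cast Nat.succ_le_succ (Nat.zero_le _)
  have hΨm : ∀ p l, nf p ≤ 2*l → (mf p : ℝ) ≤ Ψ l := by
    intro p l hle
    have hplt : p < P l := by
      by_contra h
      push_neg at h
      exact absurd (hPspec l p h) (by omega)
    have h5 : mf p ≤ (Finset.range (P l)).sup mf := Finset.le_sup (Finset.mem_range.mpr hplt)
    show (mf p : ℝ) ≤ (((Finset.range (P l)).sup mf + 1 : ℕ) : ℝ)
    exact_mod_cast Nat.le_succ_of_le h5
  -- Second test: into the weighted cost space
  letI pms : PseudoMetricSpace (ℕ →₀ ℝ) := costPMS hΨ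
  haveI tag : IsTopologicalAddGroup (ℕ →₀ ℝ) := cost_tag hΨ
  haveI csm : ContinuousSMul ℝ (ℕ →₀ ℝ) := cost_csmul hΨ
  haveI tagU : IsTopologicalAddGroup (ULift.{w} (ℕ →₀ ℝ)) :=
    { continuous_add := continuous_uliftUp.comp
        ((continuous_uliftDown.comp continuous_fst).add
          (continuous_uliftDown.comp continuous_snd))
      continuous_neg := continuous_uliftUp.comp continuous_uliftDown.neg }
  have hfEc : Continuous fun x => ULift.up.{w} (fmap U ψ x) :=
    continuous_uliftUp.comp (fmap_continuous U ψ hΨ hUo hdisj hψc hψ0 hψb')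
  obtain ⟨g₂, hg₂⟩ := (hV.2 (ULift.{w} (ℕ →₀ ℝ)) (fun x => ULift.up (fmap U ψ x)) hfEc).exists
  have hfy : ∀ l, 1 ≤ l → fmap U ψ (y l) = Finsupp.single l 1 := fun l hl => by
    rw [fmap_of_mem U ψ hdisj hl (hymem l), hψ1 l]
  have hfy0 : fmap U ψ (y 0) = 0 := by
    apply fmap_eq_zero
    intro hcon
    have hmem := idx_mem U hcon
    exact Set.disjoint_left.mp (hdisj (idx U (y 0)) 0 (by omega)) hmem (hymem 0)
  have hval2 : ∀ p, (g₂ (a p)).down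
      = ∑ l ∈ Finset.Icc 1 (nf p), Finsupp.single l ((mf p:ℝ)⁻¹) := by
    intro p
    rw [heq p, map_add, map_smul, map_smul]
    have hg0 : g₂ (i (y 0)) = 0 := by
      rw [hg₂, hfy0]
      rfl
    have hgw : (g₂ (wv (nf p))).down = ∑ l ∈ Finset.Icc 1 (nf p), Finsupp.single l (1:ℝ) := by
      rw [hwv]
      simp only
      rw [map_sum]
      let D : ULift.{w} (ℕ →₀ ℝ) →+ (ℕ →₀ ℝ) := AddMonoidHom.mk' (fun u => u.down) (fun _ _ => rfl)
      show D (∑ l ∈ Finset.Icc 1 (nf p), g₂ (i (y l))) = _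
      rw [map_sum]
      refine Finset.sum_congr rfl fun l hl => ?_
      show (g₂ (i (y l))).down = _
      rw [hg₂, hfy l (Finset.mem_Icc.mp hl).1]
    rw [hg0, smul_zero, zero_add]
    have hdown : ((mf p:ℝ)⁻¹ • g₂ (wv (nf p))).down = (mf p:ℝ)⁻¹ • (g₂ (wv (nf p))).down := rfl
    rw [hdown, hgw, Finset.smul_sum]
    refine Finset.sum_congr rfl fun l _ => ?_
    rw [Finsupp.smul_single, smul_eq_mul, mul_one]
  have hTend2 : Tendsto (fun p => (g₂ (a p)).down) atTop (𝓝 (0 : ℕ →₀ ℝ)) := by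
    have h1 : Tendsto (fun p => g₂ (a p)) atTop (𝓝 (g₂ 0)) :=
      (g₂.continuous.tendsto 0).comp haT
    rw [map_zero] at h1
    exact (continuous_uliftDown.tendsto _).comp h1
  have hev : ∀ᶠ p in atTop,
      Cost Ψ (∑ l ∈ Finset.Icc 1 (nf p), Finsupp.single l ((mf p:ℝ)⁻¹)) < 1/2 := by
    filter_upwards [Metric.tendsto_nhds.mp hTend2 (1/2) (by norm_num)] with p hp
    have hd : dist ((g₂ (a p)).down) (0 : ℕ →₀ ℝ)
        = Cost Ψ ((g₂ (a p)).down - 0) := rfl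
    rw [hd, sub_zero, hval2 p] at hp
    exact hp
  obtain ⟨p, hplt, hp2⟩ := (hev.and (hnf.eventually_ge_atTop 2)).exists
  have hblock := cost_block hΨ hp2 (hm1 p) (fun l hl => hΨm p l hl)
  linarith

end Hard

end FreeTVSAux
/-- For a Tychonoff space `X` with free topological vector space `(V, i)`:
`V` is Fréchet–Urysohn iff `X` is finite, and `V` is metrizable iff `X` is finite. -/
theorem frechetUrysohn_freeTVS_iff_finite
    {X : Type u} [TopologicalSpace X] [T35Space X]
    (V : Type v) [AddCommGroup V] [Module ℝ V] [TopologicalSpace V]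
    [IsTopologicalAddGroup V] [ContinuousSMul ℝ V] (i : X → V)
    (hV : IsFreeTVS V i) :
    (FrechetUrysohnSpace V ↔ Finite X) ∧
      (TopologicalSpace.MetrizableSpace V ↔ Finite X) := by
  have hard : FrechetUrysohnSpace V → Finite X := fun h => by
    by_contra hfin
    exact FreeTVSAux.not_frechetUrysohn_of_infinite hV (not_finite_iff_infinite.mp hfin) h
  have easy : Finite X → TopologicalSpace.MetrizableSpace V :=
    FreeTVSAux.metrizable_of_finite hV
  have mfu : TopologicalSpace.MetrizableSpace V → FrechetUrysohnSpace V := fun h => by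
    haveI := h
    infer_instance
  exact ⟨⟨hard, fun hf => mfu (easy hf)⟩, ⟨fun hm => hard (mfu hm), easy⟩⟩
end

section
/- Let X be a metrizable Tychonoff space. Then the free topological vector space V(X) has countable tightness if and only if X is separable. -/
open Topology Set

universe u v w

/-- A topological space `Y` has countable tightness if whenever `y` is in the closure of a
set `A`, there is a countable subset `B ⊆ A` with `y` in the closure of `B`. -/
def CountableTightness (Y : Type w') [TopologicalSpace Y] : Prop :=
  ∀ (A : Set Y) (y : Y), y ∈ closure A →
    ∃ B : Set Y, B ⊆ A ∧ B.Countable ∧ y ∈ closure B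

namespace FreeTVSProof

/-! ### The span of the image is everything -/

theorem span_eq_top {X : Type u} [TopologicalSpace X] {V : Type v} [AddCommGroup V] [Module ℝ V]
    [TopologicalSpace V] [IsTopologicalAddGroup V] [ContinuousSMul ℝ V] {i : X → V}
    (hV : IsFreeTVS.{u, v, w} V i) : Submodule.span ℝ (Set.range i) = ⊤ := by
  by_contra hne
  have hx : ∃ x : V, x ∉ Submodule.span ℝ (Set.range i) := by
    by_contra h'
    push_neg at h'
    exact hne (by rw [Submodule.eq_top_iff']; exact h')
  obtain ⟨x, hx⟩ := hx
  obtain ⟨ψ, hψx, hψmap⟩ := Submodule.exists_dual_map_eq_bot_of_notMem hx inferInstance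
  have hψ0 : ∀ y ∈ Submodule.span ℝ (Set.range i), ψ y = 0 := by
    intro y hy
    have hmem : ψ y ∈ Submodule.map ψ (Submodule.span ℝ (Set.range i)) :=
      Submodule.mem_map_of_mem hy
    rw [hψmap] at hmem
    simpa using hmem
  letI tE : TopologicalSpace (ULift.{w} ℝ) := ⊤
  letI : @IsTopologicalAddGroup (ULift.{w} ℝ) tE _ :=
    { continuous_add := continuous_top, continuous_neg := continuous_top }
  letI : @ContinuousSMul ℝ (ULift.{w} ℝ) _ _ tE := ⟨continuous_top⟩
  obtain ⟨g, hg, hu⟩ := hV.2 (ULift.{w} ℝ) (fun _ => (0 : ULift.{w} ℝ)) continuous_top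
  let g2 : V →L[ℝ] ULift.{w} ℝ :=
    { toLinearMap := (ULift.moduleEquiv.symm.toLinearMap).comp ψ
      cont := continuous_top }
  have h2 : g2 = g := by
    apply hu
    intro xx
    have h0 : ψ (i xx) = 0 := hψ0 _ (Submodule.subset_span ⟨xx, rfl⟩)
    show ULift.up (ψ (i xx)) = 0
    rw [h0]
    rfl
  have h0 : (0 : V →L[ℝ] ULift.{w} ℝ) = g := hu 0 (fun xx => rfl)
  have hg20 : g2 = 0 := h2.trans h0.symm
  have : (g2 x).down = ((0 : V →L[ℝ] ULift.{w} ℝ) x).down := by rw [hg20]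
  exact hψx this

/-! ### The combinatorial gadget on `ω₁` -/

/-- The canonical uncountable well-ordered type all of whose initial segments are countable. -/
noncomputable abbrev Om1 : Type u := ((Cardinal.aleph 1 : Cardinal.{u}).ord).ToType

theorem not_countable_Om1 : ¬ Countable Om1.{u} := by
  intro h
  have h1 : (Cardinal.mk Om1.{u}) ≤ Cardinal.aleph0 := Cardinal.mk_le_aleph0_iff.2 h
  rw [Cardinal.mk_toType, Cardinal.card_ord] at h1
  exact absurd (lt_of_lt_of_le Cardinal.aleph0_lt_aleph_one h1) (lt_irrefl _)

theorem countable_initialSeg (b : Om1.{u}) : Countable {a : Om1.{u} // a < b} := by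
  haveI : IsWellOrder Om1.{u} (· < ·) := isWellOrder_lt
  have h3 : Cardinal.mk {a : Om1.{u} // a < b} < Cardinal.aleph 1 := by
    have h1 : Cardinal.mk {a : Om1.{u} // a < b} =
        (Ordinal.typein (α := Om1.{u}) (· < ·) b).card := Ordinal.card_typein b
    rw [h1]
    exact Cardinal.lt_ord.1 (Ordinal.typein_lt_self b)
  have h4 : Cardinal.mk {a : Om1.{u} // a < b} < Order.succ Cardinal.aleph0 :=
    lt_of_lt_of_eq h3 Cardinal.succ_aleph0.symm
  exact Cardinal.mk_le_aleph0_iff.1 (Order.lt_succ_iff.1 h4)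

/-- For each `b`, a fixed injection of the initial segment below `b` into `ℕ`. -/
noncomputable def einj (b : Om1.{u}) : {c : Om1.{u} // c < b} → ℕ :=
  (@exists_injective_nat {c : Om1.{u} // c < b} (countable_initialSeg b)).choose

theorem einj_injective (b : Om1.{u}) : Function.Injective (einj b) :=
  (@exists_injective_nat {c : Om1.{u} // c < b} (countable_initialSeg b)).choose_spec

/-- A pairing function witnessing a "coherent-like" family of injections on `ω₁`. -/
noncomputable def epair (a b : Om1.{u}) : ℕ :=
  if h : a < b then einj b ⟨a, h⟩ else if h' : b < a then einj a ⟨b, h'⟩ else 0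

theorem epair_of_lt {a b : Om1.{u}} (h : a < b) : epair a b = einj b ⟨a, h⟩ := dif_pos h

theorem epair_comm (a b : Om1.{u}) : epair a b = epair b a := by
  unfold epair
  rcases lt_trichotomy a b with h | h | h
  · rw [dif_pos h, dif_neg (not_lt.2 h.le), dif_pos h]
  · subst h; rfl
  · rw [dif_neg (not_lt.2 h.le), dif_pos h, dif_pos h]

theorem epair_unbounded {S : Set Om1.{u}} (hS : ¬ S.Countable) (m : ℕ) :
    ∃ a ∈ S, ∃ b ∈ S, a < b ∧ m ≤ epair a b := by
  classical
  have hstep : ∃ b ∈ S, {a | a ∈ S ∧ a < b}.Infinite := by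
    by_contra hfin
    push_neg at hfin
    apply hS
    rw [Set.countable_iff_exists_injective]
    have hfin' : ∀ p : ↥S, {a | a ∈ S ∧ a < (p : Om1.{u})}.Finite := fun p =>
      hfin p p.2
    refine ⟨fun p => (hfin' p).toFinset.card, ?_⟩
    have hsm : StrictMono fun p : ↥S => (hfin' p).toFinset.card := by
      intro p q hpq
      apply Finset.card_lt_card
      rw [Finset.ssubset_iff_of_subset]
      · exact ⟨p, by simp only [Set.Finite.mem_toFinset, mem_setOf_eq]; exact ⟨p.2, hpq⟩,
          by simp only [Set.Finite.mem_toFinset, mem_setOf_eq]; exact fun hc => lt_irrefl _ hc.2⟩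
      · intro z hz
        simp only [Set.Finite.mem_toFinset, mem_setOf_eq] at hz ⊢
        exact ⟨hz.1, hz.2.trans hpq⟩
    exact hsm.injective
  obtain ⟨b, hbS, hinf⟩ := hstep
  have : ∃ a, (a ∈ S ∧ a < b) ∧ m ≤ epair a b := by
    by_contra hcon
    push_neg at hcon
    have hmap : ∀ p : ↥{a | a ∈ S ∧ a < b}, epair (p : Om1.{u}) b < m := fun p =>
      hcon p p.2
    have hinj2 : Function.Injective
        (fun p : ↥{a | a ∈ S ∧ a < b} => (⟨epair (p : Om1.{u}) b, hmap p⟩ : Fin m)) := by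
      intro p q hpq
      have hpq' : epair (p : Om1.{u}) b = epair (q : Om1.{u}) b := by
        simpa using congrArg Fin.val hpq
      rw [epair_of_lt p.2.2, epair_of_lt q.2.2] at hpq'
      have := einj_injective b hpq'
      exact Subtype.ext (by simpa using congrArg Subtype.val this)
    have : Finite ↥{a | a ∈ S ∧ a < b} := Finite.of_injective _ hinj2
    rw [Set.infinite_coe_iff.symm] at hinf
    exact absurd this hinf.not_finite
  obtain ⟨a, ⟨haS, hab⟩, hm⟩ := this
  exact ⟨a, haS, b, hbS, hab, hm⟩

theorem epair_countable_bound {C : Set Om1.{u}} (hC : C.Countable) :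
    ∃ f : Om1.{u} → ℕ, ∀ a ∈ C, ∀ b ∈ C, a < b → epair a b ≤ max (f a) (f b) := by
  classical
  rcases C.eq_empty_or_nonempty with rfl | hne
  · exact ⟨fun _ => 0, by simp⟩
  obtain ⟨φ, hφ⟩ := hC.exists_eq_range hne
  have hmem : ∀ x ∈ C, ∃ k, φ k = x := by
    intro x hx
    rw [hφ] at hx
    obtain ⟨k, hk⟩ := hx
    exact ⟨k, hk⟩
  let f : Om1.{u} → ℕ := fun x =>
    if hx : ∃ k, φ k = x then (Finset.range (Nat.find hx + 1)).sup (fun k => epair (φ k) x)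
    else 0
  refine ⟨f, ?_⟩
  intro a ha b hb hab
  have hka : ∃ k, φ k = a := hmem a ha
  have hkb : ∃ k, φ k = b := hmem b hb
  have hfa : f a = (Finset.range (Nat.find hka + 1)).sup (fun k => epair (φ k) a) := dif_pos hka
  have hfb : f b = (Finset.range (Nat.find hkb + 1)).sup (fun k => epair (φ k) b) := dif_pos hkb
  rcases le_total (Nat.find hka) (Nat.find hkb) with hle | hle
  · have h1 : epair (φ (Nat.find hka)) b ≤ f b := by
      rw [hfb]
      exact Finset.le_sup (f := fun k => epair (φ k) b)
        (Finset.mem_range.2 (Nat.lt_succ_of_le hle))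
    rw [Nat.find_spec hka] at h1
    exact le_max_of_le_right h1
  · have h1 : epair (φ (Nat.find hkb)) a ≤ f a := by
      rw [hfa]
      exact Finset.le_sup (f := fun k => epair (φ k) a)
        (Finset.mem_range.2 (Nat.lt_succ_of_le hle))
    rw [Nat.find_spec hkb, epair_comm] at h1
    exact le_max_of_le_left h1

/-! ### Separated sets in metric spaces -/

theorem exists_uncountable_separated {X : Type u} [MetricSpace X]
    (h : ¬ TopologicalSpace.SeparableSpace X) :
    ∃ ε : ℝ, 0 < ε ∧ ∃ S : Set X, ¬ S.Countable ∧
      ∀ a ∈ S, ∀ b ∈ S, a ≠ b → ε ≤ dist a b := by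
  by_contra hcon
  push_neg at hcon
  have hsep : ∀ ε : ℝ, 0 < ε → ∀ S : Set X,
      (∀ a ∈ S, ∀ b ∈ S, a ≠ b → ε ≤ dist a b) → S.Countable := by
    intro ε hε S hS
    by_contra hSc
    obtain ⟨a, ha, b, hb, hab, hd⟩ := hcon ε hε S hSc
    exact absurd (hS a ha b hb hab) (not_le.2 hd)
  apply h
  have hmax : ∀ n : ℕ, ∃ M : Set X,
      (∀ a ∈ M, ∀ b ∈ M, a ≠ b → 1/((n:ℝ)+1) ≤ dist a b) ∧
      ∀ x : X, ∃ y ∈ M, dist x y < 1/((n:ℝ)+1) := by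
    intro n
    have hchains : ∀ c ⊆ {S : Set X | ∀ a ∈ S, ∀ b ∈ S, a ≠ b → 1/((n:ℝ)+1) ≤ dist a b},
        IsChain (· ⊆ ·) c →
        ∃ ub ∈ {S : Set X | ∀ a ∈ S, ∀ b ∈ S, a ≠ b → 1/((n:ℝ)+1) ≤ dist a b},
          ∀ s ∈ c, s ⊆ ub := by
      intro c hcFam hchain
      refine ⟨⋃₀ c, ?_, fun s hs => subset_sUnion_of_mem hs⟩
      intro a ha b hb hab
      obtain ⟨s, hs, has⟩ := ha
      obtain ⟨t, ht, hbt⟩ := hb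
      rcases eq_or_ne s t with rfl | hst
      · exact hcFam hs a has b hbt hab
      · rcases hchain hs ht hst with hsub | hsub
        · exact hcFam ht a (hsub has) b hbt hab
        · exact hcFam hs a has b (hsub hbt) hab
    obtain ⟨M, hM⟩ := zorn_subset
      {S : Set X | ∀ a ∈ S, ∀ b ∈ S, a ≠ b → 1/((n:ℝ)+1) ≤ dist a b} hchains
    refine ⟨M, hM.1, ?_⟩
    intro x
    by_cases hx : x ∈ M
    · exact ⟨x, hx, by simp only [dist_self]; positivity⟩
    · by_contra hno
      push_neg at hno
      have hins : insert x M ∈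
          {S : Set X | ∀ a ∈ S, ∀ b ∈ S, a ≠ b → 1/((n:ℝ)+1) ≤ dist a b} := by
        intro a ha b hb hab
        rcases ha with rfl | ha
        · rcases hb with rfl | hb
          · exact absurd rfl hab
          · exact hno b hb
        · rcases hb with rfl | hb
          · rw [dist_comm]; exact hno a ha
          · exact hM.1 a ha b hb hab
      have hsub := hM.2 hins (subset_insert x M)
      exact hx (hsub (mem_insert x M))
  choose M hMsep hMnet using hmax
  refine ⟨⟨⋃ n, M n, countable_iUnion (fun n => hsep _ (by positivity) _ (hMsep n)), ?_⟩⟩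
  rw [Metric.dense_iff]
  intro x r hr
  obtain ⟨n, hn⟩ := exists_nat_one_div_lt hr
  obtain ⟨y, hy, hdy⟩ := hMnet n x
  exact ⟨y, Metric.mem_ball.2 (by rw [dist_comm]; exact hdy.trans hn), mem_iUnion.2 ⟨n, hy⟩⟩

theorem separated_isClosed {X : Type u} [MetricSpace X] {ε : ℝ} (hε : 0 < ε) {T : Set X}
    (hT : ∀ a ∈ T, ∀ b ∈ T, a ≠ b → ε ≤ dist a b) : IsClosed T := by
  rw [← isOpen_compl_iff, Metric.isOpen_iff]
  intro z hz
  by_cases hex : ∃ c ∈ T, dist z c < ε/2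
  · obtain ⟨c, hc, hcd⟩ := hex
    have hzc : 0 < dist z c := by
      rw [dist_pos]
      intro hzc'
      exact hz (hzc' ▸ hc)
    refine ⟨min (dist z c) (ε/2), by positivity, ?_⟩
    intro y hy
    rw [Metric.mem_ball] at hy
    intro hyT
    by_cases hyc : y = c
    · have h1 : dist y z < dist z c := lt_of_lt_of_le hy (min_le_left _ _)
      rw [hyc, dist_comm] at h1
      exact lt_irrefl _ h1
    · have h1 : ε ≤ dist y c := hT y hyT c hc hyc
      have h2 : dist y c ≤ dist y z + dist z c := dist_triangle y z c
      have h3 : dist y z < ε/2 := lt_of_lt_of_le hy (min_le_right _ _)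
      linarith
  · push_neg at hex
    refine ⟨ε/2, by positivity, ?_⟩
    intro y hy
    rw [Metric.mem_ball] at hy
    intro hyT
    have := hex y hyT
    rw [dist_comm] at this
    linarith

theorem separated_discrete {X : Type u} [MetricSpace X] {ε : ℝ} (hε : 0 < ε) {T : Set X}
    (hT : ∀ a ∈ T, ∀ b ∈ T, a ≠ b → ε ≤ dist a b) : DiscreteTopology T := by
  rw [discreteTopology_iff_isOpen_singleton]
  intro a
  have heq : ({a} : Set T) = (Subtype.val : T → X) ⁻¹' (Metric.ball (a : X) ε) := by
    ext p
    simp only [mem_singleton_iff, mem_preimage, Metric.mem_ball]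
    constructor
    · rintro rfl
      simpa using hε
    · intro hp
      by_contra hne
      have hne' : (p : X) ≠ (a : X) := fun hc => hne (Subtype.ext hc)
      exact absurd hp (not_lt.2 (hT _ p.2 _ a.2 hne'))
  rw [heq]
  exact Metric.isOpen_ball.preimage continuous_subtype_val

/-! ### Necessity : countable tightness implies separability -/

theorem separable_of_countableTightness {X : Type u} [MetricSpace X] {V : Type v}
    [AddCommGroup V] [Module ℝ V] [TopologicalSpace V] [IsTopologicalAddGroup V]
    [ContinuousSMul ℝ V] {i : X → V} (hV : IsFreeTVS.{u, v, w} V i)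
    (hct : CountableTightness V) : TopologicalSpace.SeparableSpace X := by
  classical
  by_contra hsep
  obtain ⟨ε, hε, S, hSc, hSsep⟩ := exists_uncountable_separated hsep
  have hℵ : (Cardinal.aleph 1 : Cardinal.{u}) ≤ Cardinal.mk ↥S := by
    by_contra hlt
    exact hSc ((Cardinal.countable_iff_lt_aleph_one S).2 (not_le.1 hlt))
  have hle : Cardinal.mk Om1.{u} ≤ Cardinal.mk ↥S := by
    rw [Cardinal.mk_toType, Cardinal.card_ord]
    exact hℵ
  obtain ⟨emb⟩ := Cardinal.le_def _ _ |>.1 hle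
  let dd : Om1.{u} → X := fun η => (emb η : X)
  have hdd_inj : Function.Injective dd := fun a b hab => emb.injective (Subtype.ext hab)
  have hdd_sep : ∀ a b : Om1.{u}, a ≠ b → ε ≤ dist (dd a) (dd b) :=
    fun a b hab => hSsep _ (emb a).2 _ (emb b).2 (fun hc => hab (hdd_inj hc))
  haveI hOmne : Nonempty Om1.{u} := by
    by_contra hne
    rw [not_nonempty_iff] at hne
    exact not_countable_Om1 inferInstance
  let wgt : Om1.{u} → Om1.{u} → ℝ := fun a b => ((epair a b : ℝ) + 1)⁻¹
  let A : Set V := {v | ∃ a b : Om1.{u}, a < b ∧ v = wgt a b • (i (dd a) + i (dd b))}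
  have hA0 : (0 : V) ∈ closure A := by
    rw [mem_closure_iff]
    intro o ho h0o
    obtain ⟨W, hW, hWadd⟩ := exists_nhds_zero_half (ho.mem_nhds h0o)
    have hthr : ∀ η : Om1.{u}, ∃ n : ℕ,
        ∀ t : ℝ, |t| ≤ 1/((n:ℝ)+1) → t • i (dd η) ∈ W := by
      intro η
      have hc : Continuous (fun t : ℝ => t • i (dd η)) := continuous_id.smul continuous_const
      have hpre : (fun t : ℝ => t • i (dd η)) ⁻¹' W ∈ 𝓝 (0:ℝ) := by
        apply hc.continuousAt.preimage_mem_nhds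
        rw [show (0:ℝ) • i (dd η) = 0 from zero_smul _ _]
        exact hW
      rw [Metric.mem_nhds_iff] at hpre
      obtain ⟨δ, hδ, hball⟩ := hpre
      obtain ⟨n, hn⟩ := exists_nat_one_div_lt hδ
      refine ⟨n, fun t ht => hball ?_⟩
      rw [Metric.mem_ball, Real.dist_eq, sub_zero]
      exact lt_of_le_of_lt ht hn
    choose nthr hnthr using hthr
    have hfib : ∃ m : ℕ, ¬ {η : Om1.{u} | nthr η = m}.Countable := by
      by_contra hall
      push_neg at hall
      have huniv : (Set.univ : Set Om1.{u}).Countable := by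
        have : (Set.univ : Set Om1.{u}) = ⋃ m, {η | nthr η = m} := by
          ext η; simp
        rw [this]
        exact countable_iUnion hall
      exact not_countable_Om1 (countable_univ_iff.1 huniv)
    obtain ⟨m, hm⟩ := hfib
    obtain ⟨a, ha, b, hb, hab, hmab⟩ := epair_unbounded hm m
    have hwa : |wgt a b| ≤ 1/((m:ℝ)+1) := by
      have hwgt : wgt a b = ((epair a b : ℝ) + 1)⁻¹ := rfl
      rw [hwgt, abs_of_pos (by positivity), inv_eq_one_div]
      apply one_div_le_one_div_of_le
      · positivity
      · have : (m:ℝ) ≤ (epair a b : ℝ) := by exact_mod_cast hmab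
        linarith
    have ham : nthr a = m := ha
    have hbm : nthr b = m := hb
    have h1 : wgt a b • i (dd a) ∈ W := hnthr a _ (by rw [ham]; exact hwa)
    have h2 : wgt a b • i (dd b) ∈ W := hnthr b _ (by rw [hbm]; exact hwa)
    refine ⟨wgt a b • (i (dd a) + i (dd b)), ?_, a, b, hab, rfl⟩
    rw [smul_add]
    exact hWadd _ h1 _ h2
  obtain ⟨B, hBA, hBc, hB0⟩ := hct A 0 hA0
  let pa : V → Om1.{u} := fun v => if h : v ∈ A then h.choose else Classical.arbitrary _
  let pb : V → Om1.{u} := fun v =>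
    if h : v ∈ A then h.choose_spec.choose else Classical.arbitrary _
  have hpab : ∀ v (hv : v ∈ A), pa v < pb v ∧
      v = wgt (pa v) (pb v) • (i (dd (pa v)) + i (dd (pb v))) := by
    intro v hv
    simp only [pa, pb, dif_pos hv]
    exact ⟨hv.choose_spec.choose_spec.1, hv.choose_spec.choose_spec.2⟩
  let C : Set Om1.{u} := (pa '' B) ∪ (pb '' B)
  have hCc : C.Countable := (hBc.image _).union (hBc.image _)
  obtain ⟨f, hf⟩ := epair_countable_bound hCc
  let C' : Set X := dd '' C
  have hC'sep : ∀ a ∈ C', ∀ b ∈ C', a ≠ b → ε ≤ dist a b := by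
    rintro _ ⟨p, _, rfl⟩ _ ⟨q, _, rfl⟩ hne
    exact hdd_sep p q (fun hc => hne (by rw [hc]))
  haveI hdisc : DiscreteTopology ↥C' := separated_discrete hε hC'sep
  have hC'cl : IsClosed C' := separated_isClosed hε hC'sep
  let tval : X → ℝ := fun x =>
    if hx : ∃ c, c ∈ C ∧ dd c = x then ((f hx.choose : ℝ) + 1) else 1
  have htval : ∀ c ∈ C, tval (dd c) = ((f c : ℝ) + 1) := by
    intro c hc
    have hx : ∃ c', c' ∈ C ∧ dd c' = dd c := ⟨c, hc, rfl⟩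
    have hchoice : hx.choose = c := hdd_inj hx.choose_spec.2
    simp only [tval, dif_pos hx, hchoice]
  let F₀ : C(↥C', ℝ) := ⟨fun z => tval (z : X), continuous_of_discreteTopology⟩
  obtain ⟨F, hF⟩ := F₀.exists_restrict_eq hC'cl
  have hFval : ∀ c ∈ C, F (dd c) = ((f c : ℝ) + 1) := by
    intro c hc
    have h1 : (F.restrict C') ⟨dd c, ⟨c, hc, rfl⟩⟩ = F₀ ⟨dd c, ⟨c, hc, rfl⟩⟩ := by rw [hF]
    simpa [ContinuousMap.restrict, F₀, htval c hc] using h1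
  obtain ⟨g, hg, -⟩ := hV.2 (ULift.{w} ℝ) (fun x => ULift.up (F x))
    (continuous_uliftUp.comp F.continuous)
  have hO : IsOpen {v : V | (g v).down < 1} := by
    have hcont : Continuous fun v : V => (g v).down :=
      continuous_uliftDown.comp g.continuous
    exact isOpen_lt hcont continuous_const
  have h0O : (0:V) ∈ {v : V | (g v).down < 1} := by
    simp only [mem_setOf_eq, map_zero]
    norm_num
  obtain ⟨b, hbO, hbB⟩ := mem_closure_iff.1 hB0 _ hO h0O
  obtain ⟨hlt, hbeq⟩ := hpab b (hBA hbB)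
  have hpC : pa b ∈ C := Or.inl ⟨b, hbB, rfl⟩
  have hqC : pb b ∈ C := Or.inr ⟨b, hbB, rfl⟩
  have hgb : (g b).down = wgt (pa b) (pb b) * (F (dd (pa b)) + F (dd (pb b))) := by
    conv_lhs => rw [hbeq]
    rw [map_smul, map_add, hg, hg]
    rfl
  have hbound : epair (pa b) (pb b) ≤ max (f (pa b)) (f (pb b)) := hf _ hpC _ hqC hlt
  have hEpos : (0:ℝ) < (epair (pa b) (pb b) : ℝ) + 1 := by positivity
  have hge : (1:ℝ) ≤ (g b).down := by
    rw [hgb, hFval _ hpC, hFval _ hqC]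
    have hsum : (epair (pa b) (pb b) : ℝ) + 1 ≤
        ((f (pa b) : ℝ) + 1) + ((f (pb b) : ℝ) + 1) := by
      have hmax : (epair (pa b) (pb b) : ℝ) ≤ ((f (pa b) : ℝ) + (f (pb b) : ℝ)) := by
        have h1 : epair (pa b) (pb b) ≤ f (pa b) + f (pb b) :=
          hbound.trans (max_le_add_of_nonneg (Nat.zero_le _) (Nat.zero_le _))
        exact_mod_cast h1
      linarith
    have hmul := mul_le_mul_of_nonneg_left hsum (inv_nonneg.2 hEpos.le)
    rw [inv_mul_cancel₀ (ne_of_gt hEpos)] at hmul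
    exact hmul
  rw [mem_setOf_eq] at hbO
  exact absurd hbO (not_lt.2 hge)

/-! ### Sufficiency : separability implies countable tightness -/

theorem countableTightness_of_separable {X : Type u} [MetricSpace X]
    [TopologicalSpace.SeparableSpace X] {V : Type v}
    [AddCommGroup V] [Module ℝ V] [TopologicalSpace V] [IsTopologicalAddGroup V]
    [ContinuousSMul ℝ V] {i : X → V} (hV : IsFreeTVS.{u, v, w} V i) :
    CountableTightness V := by
  classical
  haveI : SecondCountableTopology X := UniformSpace.secondCountable_of_separable X
  have hspan := span_eq_top hV
  let φ : ∀ n : ℕ, ((Fin n → ℝ) × (Fin n → X)) → V := fun n p => ∑ j, (p.1 j) • i (p.2 j)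
  have hφc : ∀ n, Continuous (φ n) := by
    intro n
    apply continuous_finset_sum
    intro j _
    exact ((continuous_apply j).comp continuous_fst).smul
      (hV.1.comp ((continuous_apply j).comp continuous_snd))
  have hsurj : ∀ v : V, ∃ n z, φ n z = v := by
    intro v
    have hv : v ∈ Submodule.span ℝ (Set.range i) := by rw [hspan]; trivial
    obtain ⟨n, c, gsub, hsum⟩ := Submodule.mem_span_set'.1 hv
    choose x hx using fun j => (gsub j).2
    refine ⟨n, (c, x), ?_⟩
    simp only [φ]
    rw [← hsum]
    apply Finset.sum_congr rfl
    intro j _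
    rw [hx j]
  intro A y hy
  let 𝒩 : Set (Set V) := ⋃ n : ℕ,
    (fun s => φ n '' s) '' (TopologicalSpace.countableBasis ((Fin n → ℝ) × (Fin n → X)))
  have h𝒩c : 𝒩.Countable :=
    countable_iUnion fun n => (TopologicalSpace.countable_countableBasis _).image _
  let pick : Set V → V := fun N => if h : (N ∩ A).Nonempty then h.choose else y
  let B : Set V := pick '' {N ∈ 𝒩 | (N ∩ A).Nonempty}
  refine ⟨B, ?_, (h𝒩c.mono (sep_subset _ _)).image _, ?_⟩
  · rintro _ ⟨N, ⟨_, hNA⟩, rfl⟩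
    have hmem := hNA.choose_spec
    simp only [pick, dif_pos hNA]
    exact hmem.2
  · rw [mem_closure_iff]
    intro o ho hyo
    obtain ⟨a, hao, haA⟩ := mem_closure_iff.1 hy o ho hyo
    obtain ⟨n, z, hz⟩ := hsurj a
    have hzmem : z ∈ φ n ⁻¹' o := by rw [mem_preimage, hz]; exact hao
    obtain ⟨s, hs, hzs, hsub⟩ :=
      (TopologicalSpace.isBasis_countableBasis _).exists_subset_of_mem_open hzmem
        (ho.preimage (hφc n))
    have hN𝒩 : φ n '' s ∈ 𝒩 := mem_iUnion.2 ⟨n, mem_image_of_mem _ hs⟩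
    have haN : a ∈ φ n '' s := ⟨z, hzs, hz⟩
    have hNA : ((φ n '' s) ∩ A).Nonempty := ⟨a, haN, haA⟩
    refine ⟨pick (φ n '' s), ?_, ?_⟩
    · have hmem := hNA.choose_spec
      simp only [pick, dif_pos hNA]
      obtain ⟨zz, hzz, hzzeq⟩ := hmem.1
      rw [← hzzeq]
      exact hsub hzz
    · exact ⟨φ n '' s, ⟨hN𝒩, hNA⟩, rfl⟩

end FreeTVSProof

/-- If `X` is a metrizable (Tychonoff) space with free topological vector
space `(V, i)`, then `V` has countable tightness if and only if `X` is separable. -/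
theorem countableTightness_freeTVS_iff_separable
    {X : Type u} [TopologicalSpace X] [TopologicalSpace.MetrizableSpace X]
    (V : Type v) [AddCommGroup V] [Module ℝ V] [TopologicalSpace V]
    [IsTopologicalAddGroup V] [ContinuousSMul ℝ V] (i : X → V)
    (hV : IsFreeTVS V i) :
    CountableTightness V ↔ TopologicalSpace.SeparableSpace X := by
  letI : MetricSpace X := TopologicalSpace.metrizableSpaceMetric X
  constructor
  · intro hct
    exact FreeTVSProof.separable_of_countableTightness hV hct
  · intro hsep
    exact FreeTVSProof.countableTightness_of_separable hV
end

section
/- Let X be a Tychonoff space. Then the free locally convex space L(X) is a Baire space if and only if X is finite. -/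
open Topology Set BoundedContinuousFunction

universe u v w

/-- `IsFreeLCS V i` says that the (real) locally convex space `V` together with the continuous
map `i : X → V` is the free locally convex space over `X`: every continuous map from `X` to a
locally convex space `E` extends uniquely to a continuous linear operator `V →L[ℝ] E`. -/
def IsFreeLCS {X : Type u} [TopologicalSpace X] (V : Type v) [AddCommGroup V] [Module ℝ V]
    [TopologicalSpace V] [IsTopologicalAddGroup V] [ContinuousSMul ℝ V]
    [LocallyConvexSpace ℝ V] (i : X → V) : Prop :=
  Continuous i ∧
    ∀ (E : Type w) [AddCommGroup E] [Module ℝ E] [TopologicalSpace E]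
      [IsTopologicalAddGroup E] [ContinuousSMul ℝ E] [LocallyConvexSpace ℝ E] (f : X → E),
      Continuous f → ∃! g : V →L[ℝ] E, ∀ x, g (i x) = f x


private def Ind : Type w := ULift ℝ
noncomputable instance : AddCommGroup Ind.{w} := inferInstanceAs (AddCommGroup (ULift ℝ))
noncomputable instance : Module ℝ Ind.{w} := inferInstanceAs (Module ℝ (ULift ℝ))
instance : TopologicalSpace Ind.{w} := ⊤
instance : ContinuousAdd Ind.{w} := ⟨continuous_top⟩
instance : ContinuousNeg Ind.{w} := ⟨continuous_top⟩
instance : IsTopologicalAddGroup Ind.{w} := {}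
instance : ContinuousSMul ℝ Ind.{w} := ⟨continuous_top⟩
instance : LocallyConvexSpace ℝ Ind.{w} := by
  refine LocallyConvexSpace.ofBasisZero ℝ _ (fun _ : Unit => (univ : Set Ind.{w})) (fun _ => True)
    ⟨fun t => ?_⟩ (fun _ _ => convex_univ)
  constructor
  · intro ht
    have : t ∈ (⊤ : Filter Ind.{w}) := by
      rwa [show (𝓝 (0 : Ind.{w})) = ⊤ from nhds_top] at ht
    exact ⟨⟨⟩, trivial, Filter.mem_top.mp this ▸ subset_rfl⟩
  · rintro ⟨_, -, hsub⟩
    rw [show (𝓝 (0 : Ind.{w})) = ⊤ from nhds_top]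
    exact Filter.mem_top.mpr (univ_subset_iff.mp hsub)


theorem baireSpace_of_homeomorph {α : Type*} {β : Type*} [TopologicalSpace α] [TopologicalSpace β]
    (e : α ≃ₜ β) [BaireSpace β] : BaireSpace α := by
  constructor
  intro f hopen hdense
  have h1 : ∀ n, IsOpen (e.symm ⁻¹' f n) := fun n => (hopen n).preimage e.symm.continuous
  have h2 : ∀ n, Dense (e.symm ⁻¹' f n) := fun n => by
    rw [Dense]
    intro y
    rw [← e.symm.preimage_closure]
    exact mem_preimage.mpr ((hdense n) _)
  have := BaireSpace.baire_property _ h1 h2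
  rw [← preimage_iInter] at this
  intro x
  have := this (e x)
  rwa [← e.symm.preimage_closure, mem_preimage, Homeomorph.symm_apply_apply] at this

private theorem exists_rep {X : Type u} (s : Finset X) (x₀ : X) (r : X → ℝ) {n : ℕ}
    (hmn : s.card ≤ n) :
    ∃ q : (Fin n → ℝ) × (Fin n → X),
      ∀ (M : Type*) [AddCommMonoid M] (G : X → ℝ → M), (∀ x, G x 0 = 0) →
        (∑ j, G (q.2 j) (q.1 j)) = ∑ y ∈ s, G y (r y) := by
  classical
  set m : ℕ := s.card with hm
  set e : Fin m ≃ {x // x ∈ s} := s.equivFin.symm with he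
  set q2 : Fin n → X := fun j => if h : (j : ℕ) < m then (e ⟨j, h⟩ : X) else x₀ with hq2
  set q1 : Fin n → ℝ := fun j =>
    if h : (j : ℕ) < m then r ((e ⟨j, h⟩ : X)) else 0 with hq1
  refine ⟨(q1, q2), ?_⟩
  intro M _ G hG0
  have h1 : (∑ j : Fin n, G (q2 j) (q1 j)) =
      ∑ j ∈ Finset.range n, (if h : j < m
        then G ((e ⟨j, h⟩ : X)) (r ((e ⟨j, h⟩ : X))) else 0) := by
    rw [← Fin.sum_univ_eq_sum_range]
    refine Finset.sum_congr rfl fun j _ => ?_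
    by_cases h : (j : ℕ) < m
    · simp [hq1, hq2, h]
    · simp [hq1, hq2, h, hG0]
  rw [h1, ← Finset.sum_subset (Finset.range_subset_range.mpr hmn)
    (fun j _ hj => dif_neg (by simpa using hj))]
  have h2 : (∑ j ∈ Finset.range m, (if h : j < m
      then G ((e ⟨j, h⟩ : X)) (r ((e ⟨j, h⟩ : X))) else 0)) =
      ∑ k : Fin m, G ((e k : X)) (r ((e k : X))) := by
    rw [← Fin.sum_univ_eq_sum_range (fun j => _)]
    refine Finset.sum_congr rfl fun k _ => ?_
    rw [dif_pos k.2]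
  rw [h2, Equiv.sum_comp e (fun y => G (y : X) (r (y : X))),
    Finset.sum_coe_sort s (fun y => G y (r y))]

section
variable {X : Type u} [TopologicalSpace X]
  {V : Type v} [AddCommGroup V] [Module ℝ V] [TopologicalSpace V]
  [IsTopologicalAddGroup V] [ContinuousSMul ℝ V] [LocallyConvexSpace ℝ V] {i : X → V}

/-- extension of real valued functions -/
theorem IsFreeLCS.exists_ext (hV : IsFreeLCS.{u,v,w} V i) {f : X → ℝ} (hf : Continuous f) :
    ∃ ψ : V →L[ℝ] ℝ, ∀ x, ψ (i x) = f x := by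
  obtain ⟨g, hg, -⟩ := hV.2 (ULift.{w} ℝ) (fun x => ULift.up (f x)) (continuous_uliftUp.comp hf)
  refine ⟨{ toLinearMap := (ULift.moduleEquiv : ULift.{w} ℝ ≃ₗ[ℝ] ℝ).toLinearMap.comp g.toLinearMap,
            cont := continuous_uliftDown.comp g.continuous }, fun x => ?_⟩
  simp only [LinearMap.coe_comp, ContinuousLinearMap.coe_coe, Function.comp_apply,
    LinearEquiv.coe_coe, ContinuousLinearMap.coe_mk']
  rw [hg x]
  rfl

theorem IsFreeLCS.span_top (hV : IsFreeLCS.{u,v,w} V i) :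
    Submodule.span ℝ (Set.range i) = ⊤ := by
  by_contra h
  set p := Submodule.span ℝ (Set.range i) with hp
  obtain ⟨v, hv⟩ : ∃ v : V, v ∉ p := by
    by_contra h'; push_neg at h'
    exact h (top_unique fun x _ => h' x)
  have hq : p.mkQ v ≠ 0 := by
    simpa [Submodule.Quotient.mk_eq_zero] using hv
  obtain ⟨φ, hφ⟩ : ∃ φ : Module.Dual ℝ (V ⧸ p), φ (p.mkQ v) ≠ 0 := by
    by_contra h'; push_neg at h'
    exact hq ((Module.forall_dual_apply_eq_zero_iff ℝ _).mp h')
  set ρ : V →ₗ[ℝ] ℝ := φ.comp p.mkQ with hρ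
  have hρ0 : ∀ x, ρ (i x) = 0 := by
    intro x
    have : i x ∈ p := Submodule.subset_span ⟨x, rfl⟩
    simp [hρ, (Submodule.Quotient.mk_eq_zero p).mpr this]
  obtain ⟨g, hg, hu⟩ := hV.2 Ind.{w} (fun _ => 0) continuous_const
  set ρ₂ : V →ₗ[ℝ] Ind.{w} :=
    { toFun := fun u => (ULift.up (ρ u) : Ind.{w})
      map_add' := fun a b => by
        show ULift.up (ρ (a + b)) = ULift.up (ρ a) + ULift.up (ρ b)
        rw [map_add]; rfl
      map_smul' := fun c a => by
        show ULift.up (ρ (c • a)) = c • ULift.up (ρ a)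
        rw [map_smul]; rfl } with hρ₂
  set g₂ : V →L[ℝ] Ind.{w} := { toLinearMap := ρ₂, cont := continuous_top } with hg₂
  have h1 : (0 : V →L[ℝ] Ind.{w}) = g := hu 0 (fun x => rfl)
  have h2 : g₂ = g := hu g₂ (fun x => by
    show (ULift.up (ρ (i x)) : Ind.{w}) = 0
    rw [hρ0 x]; rfl)
  have : g₂ v = (0 : V →L[ℝ] Ind.{w}) v := by rw [h1, h2]
  have : ρ v = 0 := congrArg ULift.down this
  exact hφ this

theorem psi_eq_sum {ψ : V →L[ℝ] ℝ} {g : X → ℝ}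
    (hψ : ∀ x, ψ (i x) = g x) (l : X →₀ ℝ) :
    ψ (Finsupp.linearCombination ℝ i l) = l.sum fun y c => c * g y := by
  rw [Finsupp.linearCombination_apply, map_finsuppSum]
  exact Finsupp.sum_congr fun y _ => by rw [map_smul, hψ y, smul_eq_mul]

variable [T35Space X]

/-- a continuous real function separating a point from a finite set -/
theorem sep_fun (x₀ : X) (s : Finset X) (hx : x₀ ∉ s) :
    ∃ g : X → ℝ, Continuous g ∧ g x₀ = 1 ∧ (∀ x ∈ s, g x = 0) ∧ ∀ x, g x ∈ Set.Icc (0:ℝ) 1 := by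
  have hK : IsClosed (s : Set X) := s.finite_toSet.isClosed
  obtain ⟨f, hf, hf0, hf1⟩ :=
    CompletelyRegularSpace.completely_regular x₀ (s : Set X) hK (by exact_mod_cast hx)
  refine ⟨fun x => 1 - (f x : ℝ), continuous_const.sub (continuous_subtype_val.comp hf),
    by simp only [hf0]; norm_num, fun x hxs => ?_, fun x => ?_⟩
  · have h1 : f x = 1 := hf1 (by exact_mod_cast hxs)
    simp only [h1]; norm_num
  · constructor
    · have := (f x).2.2; simp; linarith [(f x).2.2]
    · have := (f x).2.1; simp; linarith [(f x).2.1]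

theorem IsFreeLCS.indep (hV : IsFreeLCS.{u,v,w} V i) : LinearIndependent ℝ i := by
  classical
  rw [linearIndependent_iff]
  intro l hl
  ext x₀
  by_cases hx : x₀ ∈ l.support
  · obtain ⟨g, hg, hg1, hg0, -⟩ := sep_fun x₀ (l.support.erase x₀) (Finset.notMem_erase _ _)
    obtain ⟨ψ, hψ⟩ := hV.exists_ext hg
    have := psi_eq_sum hψ l
    rw [hl, map_zero] at this
    have hsum : (l.sum fun y c => c * g y) = l x₀ := by
      rw [Finsupp.sum]
      rw [Finset.sum_eq_single x₀]
      · rw [hg1, mul_one]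
      · intro y hy hne
        rw [hg0 y (Finset.mem_erase.mpr ⟨hne, hy⟩), mul_zero]
      · intro h; exact absurd hx h
    rw [hsum] at this
    exact this.symm
  · simpa using Finsupp.notMem_support_iff.mp hx

theorem repr_eval (b : Module.Basis X ℝ V) (hbi : ⇑b = i) {ψ : V →L[ℝ] ℝ} {g : X → ℝ}
    (hψ : ∀ x, ψ (i x) = g x) (u : V) :
    ψ u = (b.repr u).sum fun z c => c * g z := by
  conv_lhs => rw [← b.linearCombination_repr u, hbi]
  exact psi_eq_sum hψ _

theorem IsFreeLCS.baire_of_finite (hV : IsFreeLCS.{u,v,w} V i) [Finite X] : BaireSpace V := by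
  classical
  set b : Module.Basis X ℝ V := Module.Basis.mk (hV.indep) (by rw [hV.span_top]) with hbdef
  have hbi : ⇑b = i := funext fun x => Module.Basis.mk_apply _ _ x
  haveI : Module.Finite ℝ V := Module.Finite.of_basis b
  haveI : T2Space V := by
    refine ⟨fun u₁ u₂ hne => ?_⟩
    have hd : u₁ - u₂ ≠ 0 := sub_ne_zero_of_ne hne
    have hr : b.repr (u₁ - u₂) ≠ 0 := fun h => hd (by
      have := congrArg b.repr.symm h
      simpa using this)
    obtain ⟨y, hy⟩ := Finsupp.support_nonempty_iff.mpr hr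
    set g : X → ℝ := fun x => if x = y then 1 else 0 with hgdef
    have hg : Continuous g := continuous_of_discreteTopology
    obtain ⟨ψ, hψ⟩ := hV.exists_ext hg
    have hcalc : ∀ u : V, ψ u = (b.repr u).sum fun z c => c * g z := repr_eval b hbi hψ
    have hψne : ψ u₁ ≠ ψ u₂ := by
      intro heq
      have h0 : ψ (u₁ - u₂) = 0 := by rw [map_sub, heq, sub_self]
      rw [hcalc (u₁ - u₂)] at h0
      have hsum : ((b.repr (u₁ - u₂)).sum fun z c => c * g z) = b.repr (u₁ - u₂) y := by
        rw [Finsupp.sum, Finset.sum_eq_single y]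
        · simp [hgdef]
        · intro z hz hzne; simp [hgdef, hzne]
        · intro h; exact absurd hy h
      rw [hsum] at h0
      exact Finsupp.mem_support_iff.mp hy h0
    exact separated_by_continuous ψ.continuous hψne
  have e : V ≃ₗ[ℝ] (Fin (Module.finrank ℝ V) → ℝ) := (Module.finBasis ℝ V).equivFun
  exact baireSpace_of_homeomorph e.toContinuousLinearEquiv.toHomeomorph

theorem IsFreeLCS.not_baire_of_infinite (hV : IsFreeLCS.{u,v,w} V i) [Infinite X]
    [BaireSpace V] : False := by
  classical
  set b : Module.Basis X ℝ V := Module.Basis.mk (hV.indep) (by rw [hV.span_top]) with hbdef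
  have hbi : ⇑b = i := funext fun x => Module.Basis.mk_apply _ _ x
  set A : ℕ → Set V := fun n =>
    {u | (b.repr u).support.card ≤ n ∧ ((b.repr u).sum fun _ c => |c|) ≤ (n : ℝ)} with hA
  have hcover : ⋃ n, A n = univ := by
    ext u
    simp only [mem_iUnion, mem_univ, iff_true]
    refine ⟨max (b.repr u).support.card ⌈(b.repr u).sum fun _ c => |c|⌉₊, ?_, ?_⟩
    · exact le_max_left _ _
    · refine le_trans (Nat.le_ceil _) ?_
      exact_mod_cast Nat.cast_le.mpr (le_max_right _ _)
  have hclosed : ∀ n, IsClosed (A n) := by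
    intro n
    apply isClosed_of_closure_subset
    intro v hv
    obtain ⟨F, hFA, hFv⟩ := mem_closure_iff_ultrafilter.mp hv
    obtain ⟨x₀⟩ := (inferInstance : Nonempty X)
    have hrep : ∀ u ∈ A n, ∃ q : (Fin n → ℝ) × (Fin n → X),
        (u = ∑ j, q.1 j • i (q.2 j)) ∧ ((∑ j, |q.1 j|) ≤ (n : ℝ)) := by
      intro u hu
      obtain ⟨q, hq⟩ := exists_rep (b.repr u).support x₀ (b.repr u) hu.1
      refine ⟨q, ?_, ?_⟩
      · have h1 := hq V (fun x c => c • i x) (fun x => zero_smul ℝ (i x))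
        rw [h1]
        conv_lhs => rw [← b.linearCombination_repr u, hbi, Finsupp.linearCombination_apply]
        rfl
      · have h2 := hq (ULift.{v} ℝ) (fun _ c => ULift.up |c|)
          (fun _ => by show ULift.up |(0:ℝ)| = 0; rw [abs_zero]; rfl)
        have h3 := congrArg (⇑(AddEquiv.ulift : ULift.{v} ℝ ≃+ ℝ)) h2
        rw [map_sum, map_sum] at h3
        have h4 : (∑ j, |q.1 j|) = ∑ y ∈ (b.repr u).support, |b.repr u y| := h3
        rw [h4]
        exact hu.2
    choose! rep hrep1 hrep2 using hrep
    set a : V → Fin n → ℝ := fun u => (rep u).1 with ha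
    set ξ : V → Fin n → X := fun u => (rep u).2 with hξ
    have hevA : ∀ᶠ u in (F : Filter V), u ∈ A n := hFA
    have habs : ∀ j : Fin n, ∀ᶠ u in (F : Filter V), |a u j| ≤ (n : ℝ) := by
      intro j
      filter_upwards [hevA] with u hu
      refine le_trans ?_ (hrep2 u hu)
      exact Finset.single_le_sum (f := fun j' => |a u j'|) (fun j' _ => abs_nonneg _) (Finset.mem_univ j)
    have hc : ∀ j : Fin n, ∃ c : ℝ, Filter.Tendsto (fun u => a u j) F (𝓝 c) := by
      intro j
      have hle : ↑(F.map fun u => a u j) ≤ Filter.principal (Icc (-(n:ℝ)) n) := by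
        rw [Filter.le_principal_iff]
        exact (habs j).mono fun u hu => abs_le.mp hu
      obtain ⟨c, -, hc⟩ := isCompact_Icc.ultrafilter_le_nhds _ hle
      exact ⟨c, hc⟩
    choose c hcT using hc
    have hl1 : (∑ j, |c j|) ≤ (n : ℝ) := by
      have hT : Filter.Tendsto (fun u => ∑ j, |a u j|) F (𝓝 (∑ j, |c j|)) :=
        tendsto_finset_sum _ fun j _ => (hcT j).abs
      refine le_of_tendsto hT ?_
      filter_upwards [hevA] with u hu using hrep2 u hu
    have hLex : ∀ (j : Fin n) (g : X →ᵇ ℝ), ∃ L : ℝ,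
        Filter.Tendsto (fun u => g (ξ u j)) F (𝓝 L) := by
      intro j g
      have hle : ↑(F.map fun u => g (ξ u j)) ≤ Filter.principal (Icc (-‖g‖) ‖g‖) := by
        rw [Filter.le_principal_iff]
        refine Filter.mem_map.mpr (Filter.univ_mem' fun u => ?_)
        show g (ξ u j) ∈ Icc (-‖g‖) ‖g‖
        rw [mem_Icc, ← abs_le, ← Real.norm_eq_abs]
        exact g.norm_coe_le_norm _
      obtain ⟨L, -, hL⟩ := isCompact_Icc.ultrafilter_le_nhds _ hle
      exact ⟨L, hL⟩
    choose Lf hLf using hLex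
    set L : Fin n → ((X →ᵇ ℝ) →* ℝ) := fun j =>
      { toFun := Lf j
        map_one' := tendsto_nhds_unique (hLf j 1)
          (by simpa using (tendsto_const_nhds : Filter.Tendsto (fun _ : V => (1:ℝ)) F _))
        map_mul' := fun g h => tendsto_nhds_unique (hLf j (g * h))
          (by simpa using ((hLf j g).mul (hLf j h))) } with hL
    have hkey : ∀ g : X →ᵇ ℝ,
        ((b.repr v).sum fun y cc => cc * g y) = ∑ j, c j * Lf j g := by
      intro g
      obtain ⟨ψ, hψ⟩ := hV.exists_ext g.continuous
      have h1 : Filter.Tendsto (fun u => ψ u) F (𝓝 (ψ v)) :=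
        (ψ.continuous.tendsto v).comp hFv
      have h2 : (fun u => ψ u) =ᶠ[(F : Filter V)] fun u => ∑ j, a u j * g (ξ u j) := by
        filter_upwards [hevA] with u hu
        conv_lhs => rw [hrep1 u hu]
        rw [map_sum]
        exact Finset.sum_congr rfl fun j _ => by rw [map_smul, hψ, smul_eq_mul]
      have h3 : Filter.Tendsto (fun u => ∑ j, a u j * g (ξ u j)) F
          (𝓝 (∑ j, c j * Lf j g)) :=
        tendsto_finset_sum _ fun j _ => (hcT j).mul (hLf j g)
      have h4 := tendsto_nhds_unique (h1.congr' h2) h3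
      rw [← h4, repr_eval b hbi hψ v]
    set ev : X → ((X →ᵇ ℝ) →* ℝ) := fun y =>
      { toFun := fun g => g y
        map_one' := rfl
        map_mul' := fun g h => rfl } with hev
    have hev_inj : Function.Injective ev := by
      intro y y' hyy'
      by_contra hne
      obtain ⟨g, hg, hg1, hg0, hgI⟩ := sep_fun y {y'} (by simpa using hne)
      set gb : X →ᵇ ℝ := BoundedContinuousFunction.ofNormedAddCommGroup g hg 1
        (fun x => by
          rw [Real.norm_eq_abs, abs_le]
          constructor
          · linarith [(hgI x).1]
          · exact (hgI x).2) with hgb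
      have : gb y = gb y' := DFunLike.congr_fun hyy' gb
      rw [show gb y = g y from rfl, show gb y' = g y' from rfl, hg1,
        hg0 y' (Finset.mem_singleton_self y')] at this
      exact one_ne_zero this
    set u₁ : ((X →ᵇ ℝ) →* ℝ) →₀ ℝ := Finsupp.mapDomain ev (b.repr v) with hu₁
    set u₂ : ((X →ᵇ ℝ) →* ℝ) →₀ ℝ := ∑ j, Finsupp.single (L j) (c j) with hu₂
    have hu12 : u₁ = u₂ := by
      have hli := linearIndependent_monoidHom (X →ᵇ ℝ) ℝ
      rw [linearIndependent_iff] at hli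
      have h0 : Finsupp.linearCombination ℝ
          (fun χ : (X →ᵇ ℝ) →* ℝ => (χ : (X →ᵇ ℝ) → ℝ)) (u₁ - u₂) = 0 := by
        rw [map_sub, sub_eq_zero]
        funext g
        have e₁ : (Finsupp.linearCombination ℝ
            (fun χ : (X →ᵇ ℝ) →* ℝ => (χ : (X →ᵇ ℝ) → ℝ)) u₁) g =
            (b.repr v).sum fun y cc => cc * g y := by
          rw [hu₁, Finsupp.linearCombination_mapDomain, Finsupp.linearCombination_apply]
          show ((b.repr v).sum fun y cc => cc • ⇑(ev y)) g = _
          rw [Finsupp.sum, Finsupp.sum, Finset.sum_apply]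
          exact Finset.sum_congr rfl fun y _ => rfl
        have e₂ : (Finsupp.linearCombination ℝ
            (fun χ : (X →ᵇ ℝ) →* ℝ => (χ : (X →ᵇ ℝ) → ℝ)) u₂) g = ∑ j, c j * Lf j g := by
          rw [hu₂, map_sum, Finset.sum_apply]
          refine Finset.sum_congr rfl fun j _ => ?_
          rw [Finsupp.linearCombination_single]
          rfl
        rw [e₁, e₂, hkey g]
      have := hli _ h0
      exact sub_eq_zero.mp this
    have hs1 : u₁.support = (b.repr v).support.image ev :=
      Finsupp.mapDomain_support_of_injective hev_inj _
    have hcard1 : u₁.support.card = (b.repr v).support.card := by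
      rw [hs1]
      exact Finset.card_image_of_injective _ hev_inj
    have hcard2 : u₂.support.card ≤ n := by
      have hsub2 : u₂.support ⊆ Finset.univ.image L := by
        intro χ hχ
        rw [Finsupp.mem_support_iff] at hχ
        by_contra hχ'
        apply hχ
        rw [hu₂, Finset.sum_apply']
        refine Finset.sum_eq_zero fun j _ => ?_
        rw [Finsupp.single_apply, if_neg]
        intro heq
        exact hχ' (Finset.mem_image.mpr ⟨j, Finset.mem_univ j, heq⟩)
      calc u₂.support.card ≤ (Finset.univ.image L).card := Finset.card_le_card hsub2
        _ ≤ (Finset.univ : Finset (Fin n)).card := Finset.card_image_le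
        _ = n := by simp
    have hL1 : (u₁.sum fun _ t => |t|) = (b.repr v).sum fun _ t => |t| :=
      Finsupp.sum_mapDomain_index_inj hev_inj
    have hL2 : (u₂.sum fun _ t => |t|) ≤ ∑ j, |c j| := by
      rw [Finsupp.sum]
      have hstep : ∀ χ ∈ u₂.support, |u₂ χ| ≤ ∑ j, |Finsupp.single (L j) (c j) χ| := by
        intro χ _
        rw [hu₂, Finset.sum_apply']
        exact Finset.abs_sum_le_sum_abs _ _
      refine le_trans (Finset.sum_le_sum hstep) ?_
      rw [Finset.sum_comm]
      refine Finset.sum_le_sum fun j _ => ?_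
      have : ∀ χ ∈ u₂.support, |Finsupp.single (L j) (c j) χ| =
          if L j = χ then |c j| else 0 := by
        intro χ _
        rw [Finsupp.single_apply]
        split <;> simp
      rw [Finset.sum_congr rfl this, Finset.sum_ite_eq u₂.support (L j) fun _ => |c j|]
      split <;> simp [abs_nonneg]
    refine ⟨?_, ?_⟩
    · rw [← hcard1, hu12]; exact hcard2
    · rw [← hL1, hu12]; exact le_trans hL2 hl1

  obtain ⟨n, v₀, hv₀⟩ := nonempty_interior_of_iUnion_of_closed hclosed hcover
  set xs : ℕ → X := fun k => Infinite.natEmbedding X k with hxs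
  have hxinj : Function.Injective xs := (Infinite.natEmbedding X).injective
  set wv : V := ∑ j ∈ Finset.range (2 * n + 1), i (xs j) with hwv
  have hreprw : b.repr wv = ∑ j ∈ Finset.range (2 * n + 1), Finsupp.single (xs j) (1 : ℝ) := by
    rw [hwv, map_sum]
    refine Finset.sum_congr rfl fun j _ => ?_
    rw [← hbi]
    exact b.repr_self _
  have hcardw : (b.repr wv).support.card = 2 * n + 1 := by
    rw [hreprw]
    have hdisj : ∀ (j₁ j₂ : ℕ), j₁ ≠ j₂ →
        Disjoint (Finsupp.single (xs j₁) (1 : ℝ)).support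
          (Finsupp.single (xs j₂) (1 : ℝ)).support := by
      intro j₁ j₂ hne
      rw [Finsupp.support_single_ne_zero _ one_ne_zero,
        Finsupp.support_single_ne_zero _ one_ne_zero]
      simp [hxinj.ne hne, hxinj.ne (Ne.symm hne)]
    rw [Finsupp.support_sum_eq_biUnion _ hdisj,
      Finset.card_biUnion (fun j₁ _ j₂ _ h => hdisj j₁ j₂ h)]
    simp [Finsupp.support_single_ne_zero _ (one_ne_zero (α := ℝ))]
  have hv₀A : v₀ ∈ A n := interior_subset hv₀
  have hevt : ∀ᶠ t : ℝ in 𝓝 0, v₀ + t • wv ∈ interior (A n) := by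
    have hcont : Continuous fun t : ℝ => v₀ + t • wv :=
      continuous_const.add (continuous_id.smul continuous_const)
    have hT : Filter.Tendsto (fun t : ℝ => v₀ + t • wv) (𝓝 0) (𝓝 v₀) :=
      hcont.tendsto' 0 v₀ (by simp)
    exact hT.eventually (isOpen_interior.eventually_mem hv₀)
  have hevt' : ∀ᶠ t : ℝ in 𝓝[≠] (0:ℝ), v₀ + t • wv ∈ interior (A n) :=
    hevt.filter_mono nhdsWithin_le_nhds
  obtain ⟨t, htmem, htne⟩ := (hevt'.and eventually_mem_nhdsWithin).exists
  have h2 : v₀ + t • wv ∈ A n := interior_subset htmem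
  have hsub : b.repr (t • wv) = b.repr (v₀ + t • wv) - b.repr v₀ := by
    rw [map_add]; abel
  have hsupp_sub : (b.repr (t • wv)).support ⊆
      (b.repr (v₀ + t • wv)).support ∪ (b.repr v₀).support := by
    rw [hsub, sub_eq_add_neg]
    refine Finsupp.support_add.trans ?_
    rw [Finsupp.support_neg]
  have hcard2n : (b.repr (t • wv)).support.card ≤ 2 * n := by
    refine le_trans (Finset.card_le_card hsupp_sub) (le_trans (Finset.card_union_le _ _) ?_)
    have := h2.1
    have := hv₀A.1
    omega
  have hsm : (b.repr (t • wv)).support = (b.repr wv).support := by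
    rw [map_smul]
    exact Finsupp.support_smul_eq htne
  rw [hsm, hcardw] at hcard2n
  omega

end

/-- For a Tychonoff space `X` with free locally convex space `(V, i)`:
`V` is a Baire space if and only if `X` is finite. -/
theorem baire_freeLCS_iff_finite
    {X : Type u} [TopologicalSpace X] [T35Space X]
    (V : Type v) [AddCommGroup V] [Module ℝ V] [TopologicalSpace V]
    [IsTopologicalAddGroup V] [ContinuousSMul ℝ V] [LocallyConvexSpace ℝ V] (i : X → V)
    (hV : IsFreeLCS V i) :
    BaireSpace V ↔ Finite X := by
  constructor
  · intro hB
    by_contra hfin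
    haveI : Infinite X := not_finite_iff_infinite.mp hfin
    exact (hV.not_baire_of_infinite).elim
  · intro hfin
    exact hV.baire_of_finite
end
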